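/- arXiv:1410.7693 — 3 statements merged into one kernel-verified Lean document; each statement's English description precedes it below -/
import Mathlib

section
/- Let β ∈ B, R a region of β3-length N, and 0 < ε < 1/N. For any two segments ℓ0, ℓ1 of R, τ^{β3}(ℓ0,ℓ1) = (1/4) Σ_{i,j∈{−1,1}} τ^β_{iε,jε}(ℓ0,ℓ1), i.e., the orthogonal effect is the average of the four slanted effects. -/
open scoped BigOperators
noncomputable section

/-- Points of `ℝ³`. -/
abbrev R3 := Fin 3 → ℝ

/-- Euclidean inner product on `ℝ³`. -/
def dot (x y : R3) : ℝ := ∑ i, x i * y i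

/-- Determinant of the 3×3 matrix with rows `a`, `b`, `c`. -/
def det3 (a b c : R3) : ℝ := Matrix.det (Matrix.of ![a, b, c])

/-- The canonical basis vectors of `ℝ³`. -/
def stdR (i : Fin 3) : R3 := fun j => if j = i then 1 else 0

/-- `Φ`, the set of signed canonical basis vectors. -/
def PhiR : Set R3 := {u | ∃ i : Fin 3, u = stdR i ∨ u = -stdR i}

/-- A positively oriented basis with vectors in `Φ`. -/
def IsLatticeBasis (b1 b2 b3 : R3) : Prop :=
  b1 ∈ PhiR ∧ b2 ∈ PhiR ∧ b3 ∈ PhiR ∧ det3 b1 b2 b3 = 1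

/-- The basic (closed unit) cube with least corner `q ∈ ℤ³`. -/
def cubeSet (q : Fin 3 → ℤ) : Set R3 := {x | ∀ i, (q i : ℝ) ≤ x i ∧ x i ≤ q i + 1}

/-- The center of the basic cube with corner `q`. -/
def cubeCenter (q : Fin 3 → ℤ) : R3 := fun i => (q i : ℝ) + 1/2

/-- A basic cube is black when the coordinate sum of its corner is odd. -/
def cubeBlack (q : Fin 3 → ℤ) : Prop := Odd (q 0 + q 1 + q 2)

instance : DecidablePred cubeBlack := fun q => by unfold cubeBlack; infer_instance

/-- Color of a basic cube: `1` for black, `-1` for white. -/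
def col (q : Fin 3 → ℤ) : ℤ := if cubeBlack q then 1 else -1

/-- A region, given as a finite set of basic cubes (identified by corners),
realized as a subset of `ℝ³`. -/
def regionSet (R : Finset (Fin 3 → ℤ)) : Set R3 := ⋃ q ∈ R, cubeSet q

/-- A domino brick: two basic cubes sharing a face. -/
structure Domino where
  c1 : Fin 3 → ℤ
  c2 : Fin 3 → ℤ
  adj : (∑ i, |c1 i - c2 i|) = 1

instance : DecidableEq Domino := fun d e =>
  decidable_of_iff (d.c1 = e.c1 ∧ d.c2 = e.c2) (by cases d; cases e; simp)

/-- The two cubes of a domino. -/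
def Domino.cubes (d : Domino) : Finset (Fin 3 → ℤ) := {d.c1, d.c2}

/-- The domino as a subset of `ℝ³`. -/
def Domino.toSet (d : Domino) : Set R3 := cubeSet d.c1 ∪ cubeSet d.c2

/-- `v(d)`: the center of the black cube minus the center of the white cube. -/
def Domino.v (d : Domino) : R3 :=
  if cubeBlack d.c1 then (fun i => (d.c1 i : ℝ) - d.c2 i) else (fun i => (d.c2 i : ℝ) - d.c1 i)

/-- Two dominoes are the same up to the (irrelevant) ordering of their cubes. -/
def Domino.same (d e : Domino) : Prop :=
  (d.c1 = e.c1 ∧ d.c2 = e.c2) ∨ (d.c1 = e.c2 ∧ d.c2 = e.c1)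

/-- The open `u`-shade of a set `X ⊆ ℝ³`. -/
def shade (u : R3) (X : Set R3) : Set R3 :=
  interior ({y | ∃ x ∈ X, ∃ s : ℝ, 0 ≤ s ∧ y = x + s • u} \ X)

/-- The effect of the domino `d0` on the domino `d1` along `u`. -/
def tau (u : R3) (d0 d1 : Domino) : ℝ :=
  open scoped Classical in
  if (d1.toSet ∩ shade u d0.toSet).Nonempty then (1/4) * det3 d1.v d0.v u else 0

/-- The `u`-pretwist of a (finite set of) dominoes. -/
def T (u : R3) (t : Finset Domino) : ℝ := ∑ d0 ∈ t, ∑ d1 ∈ t, tau u d0 d1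

/-- `t` is a tiling of the region `R`: every domino lies in `R` and every cube
of `R` is covered by exactly one domino of `t`. -/
def IsTiling (R : Finset (Fin 3 → ℤ)) (t : Finset Domino) : Prop :=
  (∀ d ∈ t, d.c1 ∈ R ∧ d.c2 ∈ R) ∧
  ∀ q ∈ R, ∃! d, d ∈ t ∧ (q = d.c1 ∨ q = d.c2)

/-- Translation of a domino by an integer vector. -/
def Domino.translate (d : Domino) (b : Fin 3 → ℤ) : Domino :=
  ⟨fun i => d.c1 i + b i, fun i => d.c2 i + b i, by
    have h : ∀ i : Fin 3, |d.c1 i + b i - (d.c2 i + b i)| = |d.c1 i - d.c2 i| := by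
      intro i; ring_nf
    rw [Finset.sum_congr rfl fun i _ => h i]; exact d.adj⟩

/-- Reflection of a cube in the hyperplane `x_k = 0`. -/
def reflCube (k : Fin 3) (q : Fin 3 → ℤ) : Fin 3 → ℤ :=
  fun i => if i = k then -q i - 1 else q i

/-- Reflection of a domino in the hyperplane `x_k = 0`. -/
def Domino.reflect (d : Domino) (k : Fin 3) : Domino :=
  ⟨reflCube k d.c1, reflCube k d.c2, by
    have h : ∀ i : Fin 3, |reflCube k d.c1 i - reflCube k d.c2 i| = |d.c1 i - d.c2 i| := by
      intro i
      by_cases hik : i = k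
      · simp only [reflCube, if_pos hik]
        have h2 : -d.c1 i - 1 - (-d.c2 i - 1) = -(d.c1 i - d.c2 i) := by ring
        rw [h2, abs_neg]
      · simp [reflCube, hik]
    rw [Finset.sum_congr rfl fun i _ => h i]; exact d.adj⟩

/-- A signed-permutation rotation applied to a basic cube (acting on centers by
`y i = ε i * x (σ i)` and recording the new least corner). -/
def rotCube (σ : Equiv.Perm (Fin 3)) (ε : Fin 3 → ℤ) (q : Fin 3 → ℤ) : Fin 3 → ℤ :=
  fun i => if ε i = 1 then q (σ i) else -q (σ i) - 1

/-- A signed-permutation rotation applied to a domino. -/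
def Domino.rot (d : Domino) (σ : Equiv.Perm (Fin 3)) (ε : Fin 3 → ℤ) : Domino :=
  ⟨rotCube σ ε d.c1, rotCube σ ε d.c2, by
    have h : ∀ i : Fin 3, |rotCube σ ε d.c1 i - rotCube σ ε d.c2 i|
        = |d.c1 (σ i) - d.c2 (σ i)| := by
      intro i
      by_cases hi : ε i = 1
      · simp [rotCube, hi]
      · simp only [rotCube, if_neg hi]
        have h2 : -d.c1 (σ i) - 1 - (-d.c2 (σ i) - 1) = -(d.c1 (σ i) - d.c2 (σ i)) := by ring
        rw [h2, abs_neg]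
    rw [Finset.sum_congr rfl fun i _ => h i]
    rw [Equiv.sum_comp σ (fun j => |d.c1 j - d.c2 j|)]
    exact d.adj⟩

/-- Auxiliary constructor for dominoes. -/
def mkDom (p q : Fin 3 → ℤ) (h : (∑ i, |p i - q i|) = 1) : Domino := ⟨p, q, h⟩

/-- The three dominoes removed by the canonical positive trit. -/
def tritPre : Fin 3 → Domino
  | 0 => mkDom ![0,0,0] ![0,0,1] (by decide)
  | 1 => mkDom ![0,1,1] ![1,1,1] (by decide)
  | 2 => mkDom ![1,0,0] ![1,1,0] (by decide)

/-- The three dominoes placed back by the canonical positive trit. -/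
def tritPost : Fin 3 → Domino
  | 0 => mkDom ![0,0,0] ![1,0,0] (by decide)
  | 1 => mkDom ![0,0,1] ![0,1,1] (by decide)
  | 2 => mkDom ![1,1,0] ![1,1,1] (by decide)

/-- `t1` is obtained from `t0` by a flip: two dominoes of `t0` occupying a
`2×2×1` slab are replaced by the two other dominoes filling the same slab. -/
def IsFlip (t0 t1 : Finset Domino) : Prop :=
  ∃ d0 d0' d1 d1' : Domino, d0 ∈ t0 ∧ d0' ∈ t0 ∧ d0 ≠ d0' ∧
    d1 ∈ t1 ∧ d1' ∈ t1 ∧ d1 ≠ d1' ∧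
    t0 \ {d0, d0'} = t1 \ {d1, d1'} ∧
    ({d0, d0'} : Finset Domino) ≠ {d1, d1'} ∧
    d0.cubes ∪ d0'.cubes = d1.cubes ∪ d1'.cubes

/-- `t1` is obtained from `t0` by a positive trit: up to an orientation preserving
lattice isometry, three dominoes of `t0` in the canonical pre-trit position are
replaced by the three dominoes in the canonical post-trit position. -/
def IsPositiveTrit (t0 t1 : Finset Domino) : Prop :=
  ∃ (σ : Equiv.Perm (Fin 3)) (ε : Fin 3 → ℤ) (b : Fin 3 → ℤ),
    (∀ i, ε i = 1 ∨ ε i = -1) ∧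
    ((∏ i, ε i) : ℤ) * (Equiv.Perm.sign σ : ℤ) = 1 ∧
    ∃ a : Fin 3 → Domino, ∃ a' : Fin 3 → Domino,
      (∀ j, a j ∈ t0) ∧ (∀ j, a' j ∈ t1) ∧
      (∀ j, (a j).same (((tritPre j).rot σ ε).translate b)) ∧
      (∀ j, (a' j).same (((tritPost j).rot σ ε).translate b)) ∧
      t0 \ {a 0, a 1, a 2} = t1 \ {a' 0, a' 1, a' 2}

/-- A cube `q` lies in the closed shade, in the direction `±e_k` (sign `sgn`),
of the 2×2 square with normal `e_k` and corner `p` (at height `p k`). -/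
def inShade (k : Fin 3) (sgn : Bool) (p q : Fin 3 → ℤ) : Prop :=
  (∀ j, j ≠ k → q j = p j ∨ q j = p j + 1) ∧ (if sgn then p k ≤ q k else q k < p k)

instance (k : Fin 3) (sgn : Bool) (p q : Fin 3 → ℤ) : Decidable (inShade k sgn p q) := by
  unfold inShade; infer_instance

/-- The 2×2 square with normal `e_k`, corner `p`, at height `p k`
is contained in the region `R`. -/
def squareInRegion (R : Finset (Fin 3 → ℤ)) (k : Fin 3) (p : Fin 3 → ℤ) : Prop :=
  ∀ q : Fin 3 → ℤ, (∀ j, j ≠ k → q j = p j ∨ q j = p j + 1) → q k = p k →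
    q ∈ R ∨ Function.update q k (p k - 1) ∈ R

/-- `R` is fully balanced with respect to the directions `±e_k`. -/
def FullyBalancedWrt (R : Finset (Fin 3 → ℤ)) (k : Fin 3) : Prop :=
  ∀ p : Fin 3 → ℤ, squareInRegion R k p →
    (∑ q ∈ R, if inShade k true p q then col q else 0) = 0 ∧
    (∑ q ∈ R, if inShade k false p q then col q else 0) = 0

/-- `R` is a pseudocylinder with axis `e_k` and depth `n`: a planar region with
connected interior, thickened `n` layers in the direction `e_k`. -/
def IsPseudocylinder (R : Finset (Fin 3 → ℤ)) (k : Fin 3) (n : ℕ) : Prop :=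
  0 < n ∧
  (∀ q ∈ R, 0 ≤ q k ∧ q k < n) ∧
  (∀ q ∈ R, ∀ m : ℤ, 0 ≤ m → m < n → Function.update q k m ∈ R) ∧
  R.Nonempty ∧
  IsConnected (interior (regionSet (R.filter (fun q => q k = 0))))

/-- A cylinder: a pseudocylinder whose base is simply connected. -/
def IsCylinder (R : Finset (Fin 3 → ℤ)) (k : Fin 3) (n : ℕ) : Prop :=
  IsPseudocylinder R k n ∧
  SimplyConnectedSpace (interior (regionSet (R.filter (fun q => q k = 0))))

/-- A (lattice) segment: the unit straight path between the centers of two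
face-adjacent basic cubes, from the center of the cube `a` to that of `b`. -/
structure Seg where
  a : Fin 3 → ℤ
  b : Fin 3 → ℤ
  adj : (∑ i, |a i - b i|) = 1

/-- The point of a segment at parameter `x ∈ [0,1]`. -/
def Seg.pt (s : Seg) (x : ℝ) : R3 := fun i => (cubeCenter s.a i) + x * ((s.b i : ℝ) - s.a i)

/-- The direction `v(ℓ) = ℓ(1) - ℓ(0)` of a segment. -/
def Seg.vec (s : Seg) : R3 := fun i => (s.b i : ℝ) - s.a i

/-- A segment lies in a region if both its cubes do. -/
def Seg.inRegion (s : Seg) (R : Finset (Fin 3 → ℤ)) : Prop := s.a ∈ R ∧ s.b ∈ R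

/-- A straight segment in `ℝ³`, with base point `p` and direction `v`. -/
structure RSeg where
  p : R3
  v : R3

/-- The point of an `RSeg` at parameter `x ∈ [0,1]`. -/
def RSeg.pt (l : RSeg) (x : ℝ) : R3 := fun i => l.p i + x * l.v i

/-- Orientation reversal of an `RSeg`. -/
def RSeg.reverse (l : RSeg) : RSeg := ⟨fun i => l.p i + l.v i, fun i => -l.v i⟩

/-- Translation of an `RSeg`. -/
def RSeg.translate (l : RSeg) (u : R3) : RSeg := ⟨fun i => l.p i + u i, l.v⟩

/-- The `RSeg` underlying a lattice segment. -/
def Seg.toR (s : Seg) : RSeg := ⟨cubeCenter s.a, s.vec⟩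

/-- The dimer of a domino: the segment from the white center to the black center. -/
def Domino.dimer (d : Domino) : RSeg :=
  if cubeBlack d.c1 then ⟨cubeCenter d.c2, d.v⟩ else ⟨cubeCenter d.c1, d.v⟩

/-- The orthogonal projection onto the plane `u^⊥`. -/
def projO (u : R3) (x : R3) : R3 := fun i => x i - (dot x u) * u i

/-- The (slanted) projection onto `b3^⊥` with kernel spanned by `b3 + a·b1 + b·b2`. -/
def projSl (b1 b2 b3 : R3) (a b : ℝ) (x : R3) : R3 :=
  fun i => x i - (dot x b3) * (b3 i + a * b1 i + b * b2 i)

/-- The effect of segment `l0` on segment `l1` along `u` (orthogonal version). -/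
def tauR (u : R3) (l0 l1 : RSeg) : ℝ :=
  open scoped Classical in
  if ((∃ x0 ∈ Set.Icc (0:ℝ) 1, ∃ x1 ∈ Set.Icc (0:ℝ) 1,
        projO u (l0.pt x0) = projO u (l1.pt x1)) ∧ dot (l0.pt 0) u < dot (l1.pt 0) u)
  then (1/4) * det3 l1.v l0.v u else 0

/-- The slanted effect `τ^β_{a,b}(l0,l1)`. -/
def tauSl (b1 b2 b3 : R3) (a b : ℝ) (l0 l1 : RSeg) : ℝ :=
  open scoped Classical in
  if ((∃ x0 ∈ Set.Icc (0:ℝ) 1, ∃ x1 ∈ Set.Icc (0:ℝ) 1,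
        projSl b1 b2 b3 a b (l0.pt x0) = projSl b1 b2 b3 a b (l1.pt x1))
      ∧ dot (l0.pt 0) b3 < dot (l1.pt 0) b3)
  then det3 l1.v l0.v b3 else 0

/-- `T^u(A,B)` summed over two finite families of segments. -/
def Tfam {n m : ℕ} (u : R3) (A : Fin n → RSeg) (B : Fin m → RSeg) : ℝ :=
  ∑ k, ∑ l, tauR u (A k) (B l)

/-- The combinatorial linking number (along `u`) of two disjoint closed curves:
half the symmetrized sum of effects. -/
def LinkAlong {n m : ℕ} (u : R3) (A : Fin n → RSeg) (B : Fin m → RSeg) : ℝ :=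
  (Tfam u A B + Tfam u B A) / 2

/-- The `u`-pretwist of a tiling, computed via dimers. -/
def Tdim (u : R3) (t : Finset Domino) : ℝ := ∑ d0 ∈ t, ∑ d1 ∈ t, tauR u d0.dimer d1.dimer

/-- A closed curve given by a cyclic list of segments. -/
def IsClosedCurve {n : ℕ} (γ : Fin n → RSeg) : Prop :=
  2 ≤ n ∧ ∀ k : Fin n,
    (γ k).pt 1 = (γ ⟨(k.val + 1) % n, Nat.mod_lt _ k.pos⟩).pt 0

/-- A closed curve is simple when its vertices are pairwise distinct. -/
def IsSimpleCurve {n : ℕ} (γ : Fin n → RSeg) : Prop :=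
  Function.Injective (fun k : Fin n => (γ k).pt 0)

/-- The (cyclically) next segment of a curve. -/
def nextSeg {n : ℕ} (hn : 0 < n) (γ : Fin n → RSeg) (k : Fin n) : RSeg :=
  γ ⟨(k.val + 1) % n, Nat.mod_lt _ hn⟩

/-- Adjacency of basic cubes. -/
def cubeAdj (p q : Fin 3 → ℤ) : Prop := (∑ i, |p i - q i|) = 1

/-- The associated graph of a region: vertices are cubes, edges join
face-adjacent cubes. -/
def cubeGraph (R : Finset (Fin 3 → ℤ)) : SimpleGraph {q // q ∈ R} where
  Adj p q := cubeAdj p.val q.val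
  symm := by
    constructor
    intro p q h
    unfold cubeAdj at h ⊢
    rw [Finset.sum_congr rfl fun i _ => abs_sub_comm (q.val i) (p.val i)]
    exact h
  loopless := by constructor; intro p h; simp [cubeAdj] at h

/-- The prism `G × I_m` over a graph `G`: the product of `G` with a path. -/
def prism {V : Type*} (G : SimpleGraph V) (m : ℕ) : SimpleGraph (V × Fin m) where
  Adj a b := (a.1 = b.1 ∧ (a.2.val + 1 = b.2.val ∨ b.2.val + 1 = a.2.val))
    ∨ (G.Adj a.1 b.1 ∧ a.2 = b.2)
  symm := by
    constructor
    intro a b h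
    rcases h with ⟨h1, h2⟩ | ⟨h1, h2⟩
    · exact Or.inl ⟨h1.symm, h2.symm⟩
    · exact Or.inr ⟨h1.symm, h2.symm⟩
  loopless := by
    constructor
    intro a h
    rcases h with ⟨-, h2⟩ | ⟨h1, -⟩
    · omega
    · exact G.loopless.irrefl _ h1

/-- The turning indicator `η` of a curve at position `k`. -/
def eta {n : ℕ} (b2 b3 : R3) (γ : Fin n → RSeg) (k : Fin n) : ℝ :=
  open scoped Classical in
  if ((γ k).v = b2 ∧ (nextSeg k.pos γ k).v = b3)
      ∨ ((γ k).v = -b3 ∧ (nextSeg k.pos γ k).v = -b2) then 1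
  else if ((γ k).v = -b2 ∧ (nextSeg k.pos γ k).v = -b3)
      ∨ ((γ k).v = b3 ∧ (nextSeg k.pos γ k).v = b2) then -1
  else 0

/-- A box: a rectangular parallelepiped of basic cubes. -/
def IsBox (B : Finset (Fin 3 → ℤ)) : Prop :=
  ∃ lo hi : Fin 3 → ℤ, (∀ i, lo i < hi i) ∧ ∀ q, q ∈ B ↔ ∀ i, lo i ≤ q i ∧ q i < hi i
/-! ### Auxiliary lemmas for statement7 -/

def stdS (k : Fin 3) (s : ℝ) : R3 := fun j => if j = k then s else 0

lemma dot_stdS (x : R3) (k : Fin 3) (s : ℝ) : dot x (stdS k s) = x k * s := by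
  simp [dot, stdS, mul_ite, Finset.sum_ite_eq]

lemma phi_struct {u : R3} (hu : u ∈ PhiR) :
    ∃ k : Fin 3, ∃ s : ℝ, (s = 1 ∨ s = -1) ∧ u = stdS k s := by
  obtain ⟨i, hi | hi⟩ := hu
  · refine ⟨i, 1, Or.inl rfl, ?_⟩
    funext j; simp [hi, stdR, stdS]
  · refine ⟨i, -1, Or.inr rfl, ?_⟩
    funext j; simp only [hi, stdR, stdS, Pi.neg_apply]
    split <;> norm_num

lemma seg_struct (s : Seg) :
    ∃ k : Fin 3, ∃ σ : ℤ, (σ = 1 ∨ σ = -1) ∧ s.b k = s.a k + σ ∧ ∀ j, j ≠ k → s.b j = s.a j := by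
  have hadj := s.adj
  rw [Fin.sum_univ_three] at hadj
  have h0 := abs_nonneg (s.a 0 - s.b 0)
  have h1 := abs_nonneg (s.a 1 - s.b 1)
  have h2 := abs_nonneg (s.a 2 - s.b 2)
  have habs : ∀ i : Fin 3, |s.a i - s.b i| = 0 → s.b i = s.a i := by
    intro i h; have := abs_eq_zero.mp h; omega
  have habs1 : ∀ i : Fin 3, |s.a i - s.b i| = 1 →
      s.b i = s.a i + 1 ∨ s.b i = s.a i + (-1) := by
    intro i h
    rcases (abs_eq (by norm_num : (0:ℤ) ≤ 1)).mp h with h' | h' <;> omega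
  rcases show (|s.a 0 - s.b 0| = 1 ∧ |s.a 1 - s.b 1| = 0 ∧ |s.a 2 - s.b 2| = 0)
      ∨ (|s.a 0 - s.b 0| = 0 ∧ |s.a 1 - s.b 1| = 1 ∧ |s.a 2 - s.b 2| = 0)
      ∨ (|s.a 0 - s.b 0| = 0 ∧ |s.a 1 - s.b 1| = 0 ∧ |s.a 2 - s.b 2| = 1) by omega with
    ⟨ha, hb, hc⟩ | ⟨ha, hb, hc⟩ | ⟨ha, hb, hc⟩
  · rcases habs1 0 ha with h | h
    · exact ⟨0, 1, Or.inl rfl, h, by intro j hj; fin_cases j <;>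
        first | exact absurd rfl hj | exact habs _ hb | exact habs _ hc⟩
    · exact ⟨0, -1, Or.inr rfl, h, by intro j hj; fin_cases j <;>
        first | exact absurd rfl hj | exact habs _ hb | exact habs _ hc⟩
  · rcases habs1 1 hb with h | h
    · exact ⟨1, 1, Or.inl rfl, h, by intro j hj; fin_cases j <;>
        first | exact absurd rfl hj | exact habs _ ha | exact habs _ hc⟩
    · exact ⟨1, -1, Or.inr rfl, h, by intro j hj; fin_cases j <;>
        first | exact absurd rfl hj | exact habs _ ha | exact habs _ hc⟩
  · rcases habs1 2 hc with h | h
    · exact ⟨2, 1, Or.inl rfl, h, by intro j hj; fin_cases j <;>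
        first | exact absurd rfl hj | exact habs _ ha | exact habs _ hb⟩
    · exact ⟨2, -1, Or.inr rfl, h, by intro j hj; fin_cases j <;>
        first | exact absurd rfl hj | exact habs _ ha | exact habs _ hb⟩

lemma det3_apply (a b c : R3) : det3 a b c =
    a 0 * b 1 * c 2 - a 0 * b 2 * c 1 - a 1 * b 0 * c 2 +
    a 1 * b 2 * c 0 + a 2 * b 0 * c 1 - a 2 * b 1 * c 0 := by
  simp [det3, Matrix.det_fin_three]

lemma det3_stdS_zero (k1 k2 k3 : Fin 3) (s1 s2 s3 : ℝ)
    (h : k1 = k2 ∨ k1 = k3 ∨ k2 = k3) :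
    det3 (stdS k1 s1) (stdS k2 s2) (stdS k3 s3) = 0 := by
  rw [det3_apply]
  fin_cases k1 <;> fin_cases k2 <;> fin_cases k3 <;> simp_all [stdS, Fin.ext_iff]

lemma fin3_eq_of_ne {a b c : Fin 3} (hab : a ≠ b) (hac : a ≠ c) (hbc : b ≠ c)
    (d : Fin 3) : d = a ∨ d = b ∨ d = c := by
  revert hab hac hbc; revert a b c d; decide

lemma fin3_forall {k1 k2 k3 : Fin 3} (h12 : k1 ≠ k2) (h13 : k1 ≠ k3) (h23 : k2 ≠ k3)
    (P : Fin 3 → Prop) : (∀ j, P j) ↔ (P k1 ∧ P k2 ∧ P k3) := by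
  refine ⟨fun h => ⟨h _, h _, h _⟩, fun h j => ?_⟩
  rcases fin3_eq_of_ne h12 h13 h23 j with rfl | rfl | rfl
  exacts [h.1, h.2.1, h.2.2]

lemma exists_icc_split (S T : ℝ → Prop) :
    (∃ x0 ∈ Set.Icc (0:ℝ) 1, ∃ x1 ∈ Set.Icc (0:ℝ) 1, S x0 ∧ T x1) ↔
      ((∃ x, 0 ≤ x ∧ x ≤ 1 ∧ S x) ∧ (∃ x, 0 ≤ x ∧ x ≤ 1 ∧ T x)) := by
  constructor
  · rintro ⟨x0, hx0, x1, hx1, hS, hT⟩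
    rw [Set.mem_Icc] at hx0 hx1
    exact ⟨⟨x0, hx0.1, hx0.2, hS⟩, ⟨x1, hx1.1, hx1.2, hT⟩⟩
  · rintro ⟨⟨x0, ha, hb, hS⟩, ⟨x1, hc, hd, hT⟩⟩
    exact ⟨x0, Set.mem_Icc.mpr ⟨ha, hb⟩, x1, Set.mem_Icc.mpr ⟨hc, hd⟩, hS, hT⟩

lemma exists_icc_split' (S T : ℝ → Prop) :
    (∃ x0 ∈ Set.Icc (0:ℝ) 1, ∃ x1 ∈ Set.Icc (0:ℝ) 1, S x1 ∧ T x0) ↔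
      ((∃ x, 0 ≤ x ∧ x ≤ 1 ∧ S x) ∧ (∃ x, 0 ≤ x ∧ x ≤ 1 ∧ T x)) := by
  constructor
  · rintro ⟨x0, hx0, x1, hx1, hS, hT⟩
    rw [Set.mem_Icc] at hx0 hx1
    exact ⟨⟨x1, hx1.1, hx1.2, hS⟩, ⟨x0, hx0.1, hx0.2, hT⟩⟩
  · rintro ⟨⟨x1, ha, hb, hS⟩, ⟨x0, hc, hd, hT⟩⟩
    exact ⟨x0, Set.mem_Icc.mpr ⟨hc, hd⟩, x1, Set.mem_Icc.mpr ⟨ha, hb⟩, hS, hT⟩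

lemma ile {a b : ℤ} (h : (a:ℝ) ≤ (b:ℝ)) : a ≤ b := by exact_mod_cast h
lemma ilt {a b : ℤ} (h : (a:ℝ) < (b:ℝ)) : a < b := by exact_mod_cast h

lemma hit_one (c : ℤ) (θ : ℝ) :
    (∃ x, 0 ≤ x ∧ x ≤ 1 ∧ (c:ℝ) + 1*x = θ) ↔ (θ - 1 ≤ (c:ℝ) ∧ (c:ℝ) ≤ θ) := by
  constructor
  · rintro ⟨x, h0, h1, he⟩; constructor <;> linarith
  · rintro ⟨h0, h1⟩; exact ⟨θ - c, by linarith, by linarith, by ring⟩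

lemma hit_negone (c : ℤ) (θ : ℝ) :
    (∃ x, 0 ≤ x ∧ x ≤ 1 ∧ (c:ℝ) + (-1)*x = θ) ↔ (θ ≤ (c:ℝ) ∧ (c:ℝ) ≤ θ + 1) := by
  constructor
  · rintro ⟨x, h0, h1, he⟩; constructor <;> linarith
  · rintro ⟨h0, h1⟩; exact ⟨(c:ℝ) - θ, by linarith, by linarith, by ring⟩

lemma core_sum (c : ℤ) (ρ : ℝ) (hρ : ρ = 1 ∨ ρ = -1) (δ : ℝ) (hd0 : 0 < δ) (hd1 : δ < 1)
    (θp θm : ℝ) (hθ : (θp = δ ∧ θm = -δ) ∨ (θp = -δ ∧ θm = δ)) :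
    ((∃ x, 0 ≤ x ∧ x ≤ 1 ∧ (c:ℝ) + ρ*x = 0) ↔
      ((∃ x, 0 ≤ x ∧ x ≤ 1 ∧ (c:ℝ) + ρ*x = θp) ∨ (∃ x, 0 ≤ x ∧ x ≤ 1 ∧ (c:ℝ) + ρ*x = θm)))
    ∧ ¬((∃ x, 0 ≤ x ∧ x ≤ 1 ∧ (c:ℝ) + ρ*x = θp) ∧ (∃ x, 0 ≤ x ∧ x ≤ 1 ∧ (c:ℝ) + ρ*x = θm)) := by
  rcases hρ with rfl | rfl
  · have e0 : (∃ x, 0 ≤ x ∧ x ≤ 1 ∧ (c:ℝ) + 1*x = 0) ↔ (c = 0 ∨ c = -1) := by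
      rw [hit_one]
      constructor
      · rintro ⟨h0, h1⟩
        have ha := ile (a := -1) (b := c) (by push_cast; linarith)
        have hb := ile (a := c) (b := 0) (by push_cast; linarith)
        omega
      · rintro (rfl | rfl) <;> push_cast <;> constructor <;> linarith
    have hone : ∀ θ : ℝ, 0 < θ → θ < 1 →
        ((∃ x, 0 ≤ x ∧ x ≤ 1 ∧ (c:ℝ) + 1*x = θ) ↔ c = 0) := by
      intro θ ht0 ht1
      rw [hit_one]
      constructor
      · rintro ⟨h0, h1⟩
        have ha := ilt (a := -1) (b := c) (by push_cast; linarith)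
        have hb := ilt (a := c) (b := 1) (by push_cast; linarith)
        omega
      · rintro rfl; push_cast; constructor <;> linarith
    have hmone : ∀ θ : ℝ, -1 < θ → θ < 0 →
        ((∃ x, 0 ≤ x ∧ x ≤ 1 ∧ (c:ℝ) + 1*x = θ) ↔ c = -1) := by
      intro θ ht0 ht1
      rw [hit_one]
      constructor
      · rintro ⟨h0, h1⟩
        have ha := ilt (a := -2) (b := c) (by push_cast; linarith)
        have hb := ilt (a := c) (b := 0) (by push_cast; linarith)
        omega
      · rintro rfl; push_cast; constructor <;> linarith
    rcases hθ with ⟨h1, h2⟩ | ⟨h1, h2⟩ <;>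
      rw [h1, h2, e0, hone δ hd0 hd1, hmone (-δ) (by linarith) (by linarith)] <;>
      exact ⟨by omega, by omega⟩
  · have e0 : (∃ x, 0 ≤ x ∧ x ≤ 1 ∧ (c:ℝ) + (-1)*x = 0) ↔ (c = 0 ∨ c = 1) := by
      rw [hit_negone]
      constructor
      · rintro ⟨h0, h1⟩
        have ha := ile (a := 0) (b := c) (by push_cast; linarith)
        have hb := ile (a := c) (b := 1) (by push_cast; linarith)
        omega
      · rintro (rfl | rfl) <;> push_cast <;> constructor <;> linarith
    have hone : ∀ θ : ℝ, 0 < θ → θ < 1 →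
        ((∃ x, 0 ≤ x ∧ x ≤ 1 ∧ (c:ℝ) + (-1)*x = θ) ↔ c = 1) := by
      intro θ ht0 ht1
      rw [hit_negone]
      constructor
      · rintro ⟨h0, h1⟩
        have ha := ilt (a := 0) (b := c) (by push_cast; linarith)
        have hb := ilt (a := c) (b := 2) (by push_cast; linarith)
        omega
      · rintro rfl; push_cast; constructor <;> linarith
    have hmone : ∀ θ : ℝ, -1 < θ → θ < 0 →
        ((∃ x, 0 ≤ x ∧ x ≤ 1 ∧ (c:ℝ) + (-1)*x = θ) ↔ c = 0) := by
      intro θ ht0 ht1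
      rw [hit_negone]
      constructor
      · rintro ⟨h0, h1⟩
        have ha := ilt (a := -1) (b := c) (by push_cast; linarith)
        have hb := ilt (a := c) (b := 1) (by push_cast; linarith)
        omega
      · rintro rfl; push_cast; constructor <;> linarith
    rcases hθ with ⟨h1, h2⟩ | ⟨h1, h2⟩ <;>
      rw [h1, h2, e0, hone δ hd0 hd1, hmone (-δ) (by linarith) (by linarith)] <;>
      exact ⟨by omega, by omega⟩

theorem statement7 (b1 b2 b3 : R3) (hβ : IsLatticeBasis b1 b2 b3)
    (R : Finset (Fin 3 → ℤ)) (N : ℝ)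
    (hN : ∀ p ∈ R, ∀ q ∈ R, |dot (cubeCenter p) b3 - dot (cubeCenter q) b3| ≤ N)
    (ε : ℝ) (hε : 0 < ε) (hε' : ε < 1/N)
    (l0 l1 : Seg) (h0 : l0.inRegion R) (h1 : l1.inRegion R) :
    tauR b3 l0.toR l1.toR = (1/4) *
      (tauSl b1 b2 b3 ε ε l0.toR l1.toR + tauSl b1 b2 b3 ε (-ε) l0.toR l1.toR +
       tauSl b1 b2 b3 (-ε) ε l0.toR l1.toR + tauSl b1 b2 b3 (-ε) (-ε) l0.toR l1.toR) := by
  classical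
  obtain ⟨hb1m, hb2m, hb3m, hdet⟩ := hβ
  obtain ⟨k1, s1, hs1, rfl⟩ := phi_struct hb1m
  obtain ⟨k2, s2, hs2, rfl⟩ := phi_struct hb2m
  obtain ⟨k3, s3, hs3, rfl⟩ := phi_struct hb3m
  have hkd : ¬(k1 = k2 ∨ k1 = k3 ∨ k2 = k3) := by
    intro h
    rw [det3_stdS_zero k1 k2 k3 s1 s2 s3 h] at hdet
    exact absurd hdet (by norm_num)
  push_neg at hkd
  obtain ⟨hk12, hk13, hk23⟩ := hkd
  obtain ⟨m0, σ0, hσ0, hseg0k, hseg0⟩ := seg_struct l0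
  obtain ⟨m1, σ1, hσ1, hseg1k, hseg1⟩ := seg_struct l1
  have hv0 : (Seg.toR l0).v = stdS m0 (σ0:ℝ) := by
    funext j
    show (l0.b j : ℝ) - l0.a j = stdS m0 (σ0:ℝ) j
    by_cases h : j = m0
    · subst h; rw [hseg0k, stdS, if_pos rfl]; push_cast; ring
    · rw [hseg0 j h, stdS]; rw [if_neg h]; ring
  have hv1 : (Seg.toR l1).v = stdS m1 (σ1:ℝ) := by
    funext j
    show (l1.b j : ℝ) - l1.a j = stdS m1 (σ1:ℝ) j
    by_cases h : j = m1
    · subst h; rw [hseg1k, stdS, if_pos rfl]; push_cast; ring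
    · rw [hseg1 j h, stdS]; rw [if_neg h]; ring
  by_cases hd : det3 (Seg.toR l1).v (Seg.toR l0).v (stdS k3 s3) = 0
  · simp [tauR, tauSl, hd]
  have hm : ¬(m1 = m0 ∨ m1 = k3 ∨ m0 = k3) := by
    intro h
    exact hd (by rw [hv0, hv1]; exact det3_stdS_zero m1 m0 k3 _ _ _ h)
  push_neg at hm
  obtain ⟨hm10, hm1k3, hm0k3⟩ := hm
  by_cases hh : dot ((Seg.toR l0).pt 0) (stdS k3 s3) < dot ((Seg.toR l1).pt 0) (stdS k3 s3)
  swap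
  · simp [tauR, tauSl, hh]
  have hs3sq : s3 * s3 = 1 := by rcases hs3 with h | h <;> rw [h] <;> norm_num
  have hdotdiff : dot ((Seg.toR l1).pt 0) (stdS k3 s3) - dot ((Seg.toR l0).pt 0) (stdS k3 s3)
      = s3 * ((l1.a k3 : ℝ) - l0.a k3) := by
    rw [dot_stdS, dot_stdS]
    show (cubeCenter l1.a k3 + 0 * (Seg.toR l1).v k3) * s3
        - (cubeCenter l0.a k3 + 0 * (Seg.toR l0).v k3) * s3 = _
    rw [cubeCenter, cubeCenter]; ring
  have hHpos : 0 < s3 * ((l1.a k3 : ℝ) - l0.a k3) := by linarith [hdotdiff, hh]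
  obtain ⟨z, hz⟩ : ∃ z : ℤ, (z:ℝ) = s3 * ((l1.a k3 : ℝ) - l0.a k3) := by
    rcases hs3 with h | h
    · exact ⟨l1.a k3 - l0.a k3, by rw [h]; push_cast; ring⟩
    · exact ⟨l0.a k3 - l1.a k3, by rw [h]; push_cast; ring⟩
  have hz0 : 0 < z := by
    have := hHpos; rw [← hz] at this; exact_mod_cast this
  have hH1 : (1:ℝ) ≤ s3 * ((l1.a k3 : ℝ) - l0.a k3) := by
    rw [← hz]; exact_mod_cast hz0
  have hHN : s3 * ((l1.a k3 : ℝ) - l0.a k3) ≤ N := by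
    have h2 := hN l1.a h1.1 l0.a h0.1
    have e : dot (cubeCenter l1.a) (stdS k3 s3) - dot (cubeCenter l0.a) (stdS k3 s3)
        = s3 * ((l1.a k3 : ℝ) - l0.a k3) := by
      rw [dot_stdS, dot_stdS, cubeCenter, cubeCenter]; ring
    have h3 := le_abs_self (dot (cubeCenter l1.a) (stdS k3 s3) - dot (cubeCenter l0.a) (stdS k3 s3))
    linarith
  have hNpos : 0 < N := by linarith
  have hδ0 : 0 < ε * (s3 * ((l1.a k3 : ℝ) - l0.a k3)) := mul_pos hε hHpos
  have hδ1 : ε * (s3 * ((l1.a k3 : ℝ) - l0.a k3)) < 1 := by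
    have e1 : ε * (s3 * ((l1.a k3 : ℝ) - l0.a k3)) ≤ ε * N := mul_le_mul_of_nonneg_left hHN hε.le
    have e2 : ε * N < (1/N) * N := mul_lt_mul_of_pos_right hε' hNpos
    have e3 : (1/N) * N = 1 := by field_simp
    linarith
  have hproj : ∀ (a b : ℝ) (x : R3) (j : Fin 3),
      projSl (stdS k1 s1) (stdS k2 s2) (stdS k3 s3) a b x j
        = x j - (x k3 * s3) * (stdS k3 s3 j + a * stdS k1 s1 j + b * stdS k2 s2 j) := by
    intro a b x j; rw [projSl, dot_stdS]
  have hprojO : ∀ (x : R3) (j : Fin 3),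
      projO (stdS k3 s3) x j = x j - (x k3 * s3) * stdS k3 s3 j := by
    intro x j; rw [projO, dot_stdS]
  have hm0k : m0 = k1 ∨ m0 = k2 := by
    rcases fin3_eq_of_ne hk12 hk13 hk23 m0 with h | h | h
    exacts [Or.inl h, Or.inr h, absurd h hm0k3]
  have hm1k : m1 = k1 ∨ m1 = k2 := by
    rcases fin3_eq_of_ne hk12 hk13 hk23 m1 with h | h | h
    exacts [Or.inl h, Or.inr h, absurd h hm1k3]
  have hpt0 : ∀ (x : ℝ) (j : Fin 3),
      (Seg.toR l0).pt x j = (l0.a j : ℝ) + 1/2 + x * stdS m0 (σ0:ℝ) j := by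
    intro x j
    show cubeCenter l0.a j + x * (Seg.toR l0).v j = _
    rw [cubeCenter, hv0]
  have hpt1 : ∀ (x : ℝ) (j : Fin 3),
      (Seg.toR l1).pt x j = (l1.a j : ℝ) + 1/2 + x * stdS m1 (σ1:ℝ) j := by
    intro x j
    show cubeCenter l1.a j + x * (Seg.toR l1).v j = _
    rw [cubeCenter, hv1]
  rcases hm0k with hm0 | hm0 <;> rcases hm1k with hm1 | hm1
  · exact absurd (hm1.trans hm0.symm) hm10
  -- CASE A: m0 = k1, m1 = k2
  · subst hm0; subst hm1
    have hpteqSl : ∀ (a b x0 x1 : ℝ),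
        (projSl (stdS m0 s1) (stdS m1 s2) (stdS k3 s3) a b ((Seg.toR l0).pt x0)
          = projSl (stdS m0 s1) (stdS m1 s2) (stdS k3 s3) a b ((Seg.toR l1).pt x1)) ↔
        ((((l0.a m0 - l1.a m0 : ℤ)):ℝ) + (σ0:ℝ) * x0
            = -(a * s1 * (s3 * ((l1.a k3 : ℝ) - l0.a k3)))
          ∧ (((l0.a m1 - l1.a m1 : ℤ)):ℝ) + (-(σ1:ℝ)) * x1
            = -(b * s2 * (s3 * ((l1.a k3 : ℝ) - l0.a k3)))) := by
      intro a b x0 x1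
      rw [funext_iff, fin3_forall hk12 hk13 hk23]
      simp only [hproj, hpt0, hpt1, stdS, hk12, hk13, hk23, Ne.symm hk12, Ne.symm hk13,
        Ne.symm hk23, eq_self_iff_true, if_true, if_false, mul_zero, zero_mul, mul_one,
        one_mul, add_zero, zero_add]
      push_cast
      constructor
      · rintro ⟨e1, e2, e3⟩
        constructor
        · linear_combination e1
        · linear_combination e2
      · rintro ⟨e1, e2⟩
        refine ⟨by linear_combination e1, by linear_combination e2, ?_⟩
        linear_combination ((l1.a k3 : ℝ) - l0.a k3) * hs3sq
    have hpteqO : ∀ (x0 x1 : ℝ),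
        (projO (stdS k3 s3) ((Seg.toR l0).pt x0) = projO (stdS k3 s3) ((Seg.toR l1).pt x1)) ↔
        ((((l0.a m0 - l1.a m0 : ℤ)):ℝ) + (σ0:ℝ) * x0 = 0
          ∧ (((l0.a m1 - l1.a m1 : ℤ)):ℝ) + (-(σ1:ℝ)) * x1 = 0) := by
      intro x0 x1
      rw [funext_iff, fin3_forall hk12 hk13 hk23]
      simp only [hprojO, hpt0, hpt1, stdS, hk12, hk13, hk23, Ne.symm hk12, Ne.symm hk13,
        Ne.symm hk23, eq_self_iff_true, if_true, if_false, mul_zero, zero_mul, mul_one,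
        one_mul, add_zero, zero_add]
      push_cast
      constructor
      · rintro ⟨e1, e2, e3⟩
        constructor
        · linear_combination e1
        · linear_combination e2
      · rintro ⟨e1, e2⟩
        refine ⟨by linear_combination e1, by linear_combination e2, ?_⟩
        linear_combination ((l1.a k3 : ℝ) - l0.a k3) * hs3sq
    have key : ∀ a b : ℝ,
        (∃ x0 ∈ Set.Icc (0:ℝ) 1, ∃ x1 ∈ Set.Icc (0:ℝ) 1,
          projSl (stdS m0 s1) (stdS m1 s2) (stdS k3 s3) a b ((Seg.toR l0).pt x0)
            = projSl (stdS m0 s1) (stdS m1 s2) (stdS k3 s3) a b ((Seg.toR l1).pt x1)) ↔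
        ((∃ x, 0 ≤ x ∧ x ≤ 1 ∧ (((l0.a m0 - l1.a m0 : ℤ)):ℝ) + (σ0:ℝ) * x
            = -(a * s1 * (s3 * ((l1.a k3 : ℝ) - l0.a k3))))
          ∧ (∃ x, 0 ≤ x ∧ x ≤ 1 ∧ (((l0.a m1 - l1.a m1 : ℤ)):ℝ) + (-(σ1:ℝ)) * x
            = -(b * s2 * (s3 * ((l1.a k3 : ℝ) - l0.a k3))))) := by
      intro a b
      simp only [hpteqSl]
      exact exists_icc_split _ _
    have key0 :
        (∃ x0 ∈ Set.Icc (0:ℝ) 1, ∃ x1 ∈ Set.Icc (0:ℝ) 1,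
          projO (stdS k3 s3) ((Seg.toR l0).pt x0) = projO (stdS k3 s3) ((Seg.toR l1).pt x1)) ↔
        ((∃ x, 0 ≤ x ∧ x ≤ 1 ∧ (((l0.a m0 - l1.a m0 : ℤ)):ℝ) + (σ0:ℝ) * x = 0)
          ∧ (∃ x, 0 ≤ x ∧ x ≤ 1 ∧ (((l0.a m1 - l1.a m1 : ℤ)):ℝ) + (-(σ1:ℝ)) * x = 0)) := by
      simp only [hpteqO]
      exact exists_icc_split _ _
    have hρ1 : (σ0:ℝ) = 1 ∨ (σ0:ℝ) = -1 := by
      rcases hσ0 with h | h <;> rw [h] <;> [left; right] <;> norm_num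
    have hρ2 : (-(σ1:ℝ)) = 1 ∨ (-(σ1:ℝ)) = -1 := by
      rcases hσ1 with h | h <;> rw [h] <;> [right; left] <;> norm_num
    obtain ⟨hiff1, hexcl1⟩ := core_sum (l0.a m0 - l1.a m0) (σ0:ℝ) hρ1
      (ε * (s3 * ((l1.a k3 : ℝ) - l0.a k3))) hδ0 hδ1
      (-(ε * s1 * (s3 * ((l1.a k3 : ℝ) - l0.a k3))))
      (-(-ε * s1 * (s3 * ((l1.a k3 : ℝ) - l0.a k3))))
      (by rcases hs1 with h | h <;> rw [h]
          · exact Or.inr ⟨by ring, by ring⟩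
          · exact Or.inl ⟨by ring, by ring⟩)
    obtain ⟨hiff2, hexcl2⟩ := core_sum (l0.a m1 - l1.a m1) (-(σ1:ℝ)) hρ2
      (ε * (s3 * ((l1.a k3 : ℝ) - l0.a k3))) hδ0 hδ1
      (-(ε * s2 * (s3 * ((l1.a k3 : ℝ) - l0.a k3))))
      (-(-ε * s2 * (s3 * ((l1.a k3 : ℝ) - l0.a k3))))
      (by rcases hs2 with h | h <;> rw [h]
          · exact Or.inr ⟨by ring, by ring⟩
          · exact Or.inl ⟨by ring, by ring⟩)
    simp only [tauR, tauSl, key, key0, hh, and_true]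
    by_cases h1p : (∃ x, 0 ≤ x ∧ x ≤ 1 ∧ (((l0.a m0 - l1.a m0 : ℤ)):ℝ) + (σ0:ℝ) * x
        = -(ε * s1 * (s3 * ((l1.a k3 : ℝ) - l0.a k3)))) <;>
    by_cases h1m : (∃ x, 0 ≤ x ∧ x ≤ 1 ∧ (((l0.a m0 - l1.a m0 : ℤ)):ℝ) + (σ0:ℝ) * x
        = -(-ε * s1 * (s3 * ((l1.a k3 : ℝ) - l0.a k3)))) <;>
    by_cases h2p : (∃ x, 0 ≤ x ∧ x ≤ 1 ∧ (((l0.a m1 - l1.a m1 : ℤ)):ℝ) + (-(σ1:ℝ)) * x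
        = -(ε * s2 * (s3 * ((l1.a k3 : ℝ) - l0.a k3)))) <;>
    by_cases h2m : (∃ x, 0 ≤ x ∧ x ≤ 1 ∧ (((l0.a m1 - l1.a m1 : ℤ)):ℝ) + (-(σ1:ℝ)) * x
        = -(-ε * s2 * (s3 * ((l1.a k3 : ℝ) - l0.a k3)))) <;>
    first
      | exact absurd (And.intro h1p h1m) hexcl1
      | exact absurd (And.intro h2p h2m) hexcl2
      | (simp only [hiff1, hiff2, h1p, h1m, h2p, h2m, or_true, true_or, or_self, or_false,
          false_or, and_true, true_and, and_false, false_and, and_self, ite_true, ite_false,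
          eq_self_iff_true]; norm_num)
  -- CASE B: m0 = k2, m1 = k1
  · subst hm0; subst hm1
    have hpteqSl : ∀ (a b x0 x1 : ℝ),
        (projSl (stdS m1 s1) (stdS m0 s2) (stdS k3 s3) a b ((Seg.toR l0).pt x0)
          = projSl (stdS m1 s1) (stdS m0 s2) (stdS k3 s3) a b ((Seg.toR l1).pt x1)) ↔
        ((((l0.a m1 - l1.a m1 : ℤ)):ℝ) + (-(σ1:ℝ)) * x1
            = -(a * s1 * (s3 * ((l1.a k3 : ℝ) - l0.a k3)))
          ∧ (((l0.a m0 - l1.a m0 : ℤ)):ℝ) + (σ0:ℝ) * x0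
            = -(b * s2 * (s3 * ((l1.a k3 : ℝ) - l0.a k3)))) := by
      intro a b x0 x1
      rw [funext_iff, fin3_forall hk12 hk13 hk23]
      simp only [hproj, hpt0, hpt1, stdS, hk12, hk13, hk23, Ne.symm hk12, Ne.symm hk13,
        Ne.symm hk23, eq_self_iff_true, if_true, if_false, mul_zero, zero_mul, mul_one,
        one_mul, add_zero, zero_add]
      push_cast
      constructor
      · rintro ⟨e1, e2, e3⟩
        constructor
        · linear_combination e1
        · linear_combination e2
      · rintro ⟨e1, e2⟩
        refine ⟨by linear_combination e1, by linear_combination e2, ?_⟩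
        linear_combination ((l1.a k3 : ℝ) - l0.a k3) * hs3sq
    have hpteqO : ∀ (x0 x1 : ℝ),
        (projO (stdS k3 s3) ((Seg.toR l0).pt x0) = projO (stdS k3 s3) ((Seg.toR l1).pt x1)) ↔
        ((((l0.a m1 - l1.a m1 : ℤ)):ℝ) + (-(σ1:ℝ)) * x1 = 0
          ∧ (((l0.a m0 - l1.a m0 : ℤ)):ℝ) + (σ0:ℝ) * x0 = 0) := by
      intro x0 x1
      rw [funext_iff, fin3_forall hk12 hk13 hk23]
      simp only [hprojO, hpt0, hpt1, stdS, hk12, hk13, hk23, Ne.symm hk12, Ne.symm hk13,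
        Ne.symm hk23, eq_self_iff_true, if_true, if_false, mul_zero, zero_mul, mul_one,
        one_mul, add_zero, zero_add]
      push_cast
      constructor
      · rintro ⟨e1, e2, e3⟩
        constructor
        · linear_combination e1
        · linear_combination e2
      · rintro ⟨e1, e2⟩
        refine ⟨by linear_combination e1, by linear_combination e2, ?_⟩
        linear_combination ((l1.a k3 : ℝ) - l0.a k3) * hs3sq
    have key : ∀ a b : ℝ,
        (∃ x0 ∈ Set.Icc (0:ℝ) 1, ∃ x1 ∈ Set.Icc (0:ℝ) 1,
          projSl (stdS m1 s1) (stdS m0 s2) (stdS k3 s3) a b ((Seg.toR l0).pt x0)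
            = projSl (stdS m1 s1) (stdS m0 s2) (stdS k3 s3) a b ((Seg.toR l1).pt x1)) ↔
        ((∃ x, 0 ≤ x ∧ x ≤ 1 ∧ (((l0.a m1 - l1.a m1 : ℤ)):ℝ) + (-(σ1:ℝ)) * x
            = -(a * s1 * (s3 * ((l1.a k3 : ℝ) - l0.a k3))))
          ∧ (∃ x, 0 ≤ x ∧ x ≤ 1 ∧ (((l0.a m0 - l1.a m0 : ℤ)):ℝ) + (σ0:ℝ) * x
            = -(b * s2 * (s3 * ((l1.a k3 : ℝ) - l0.a k3))))) := by
      intro a b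
      simp only [hpteqSl]
      exact exists_icc_split' _ _
    have key0 :
        (∃ x0 ∈ Set.Icc (0:ℝ) 1, ∃ x1 ∈ Set.Icc (0:ℝ) 1,
          projO (stdS k3 s3) ((Seg.toR l0).pt x0) = projO (stdS k3 s3) ((Seg.toR l1).pt x1)) ↔
        ((∃ x, 0 ≤ x ∧ x ≤ 1 ∧ (((l0.a m1 - l1.a m1 : ℤ)):ℝ) + (-(σ1:ℝ)) * x = 0)
          ∧ (∃ x, 0 ≤ x ∧ x ≤ 1 ∧ (((l0.a m0 - l1.a m0 : ℤ)):ℝ) + (σ0:ℝ) * x = 0)) := by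
      simp only [hpteqO]
      exact exists_icc_split' _ _
    have hρ1 : (-(σ1:ℝ)) = 1 ∨ (-(σ1:ℝ)) = -1 := by
      rcases hσ1 with h | h <;> rw [h] <;> [right; left] <;> norm_num
    have hρ2 : (σ0:ℝ) = 1 ∨ (σ0:ℝ) = -1 := by
      rcases hσ0 with h | h <;> rw [h] <;> [left; right] <;> norm_num
    obtain ⟨hiff1, hexcl1⟩ := core_sum (l0.a m1 - l1.a m1) (-(σ1:ℝ)) hρ1
      (ε * (s3 * ((l1.a k3 : ℝ) - l0.a k3))) hδ0 hδ1
      (-(ε * s1 * (s3 * ((l1.a k3 : ℝ) - l0.a k3))))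
      (-(-ε * s1 * (s3 * ((l1.a k3 : ℝ) - l0.a k3))))
      (by rcases hs1 with h | h <;> rw [h]
          · exact Or.inr ⟨by ring, by ring⟩
          · exact Or.inl ⟨by ring, by ring⟩)
    obtain ⟨hiff2, hexcl2⟩ := core_sum (l0.a m0 - l1.a m0) (σ0:ℝ) hρ2
      (ε * (s3 * ((l1.a k3 : ℝ) - l0.a k3))) hδ0 hδ1
      (-(ε * s2 * (s3 * ((l1.a k3 : ℝ) - l0.a k3))))
      (-(-ε * s2 * (s3 * ((l1.a k3 : ℝ) - l0.a k3))))
      (by rcases hs2 with h | h <;> rw [h]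
          · exact Or.inr ⟨by ring, by ring⟩
          · exact Or.inl ⟨by ring, by ring⟩)
    simp only [tauR, tauSl, key, key0, hh, and_true]
    by_cases h1p : (∃ x, 0 ≤ x ∧ x ≤ 1 ∧ (((l0.a m1 - l1.a m1 : ℤ)):ℝ) + (-(σ1:ℝ)) * x
        = -(ε * s1 * (s3 * ((l1.a k3 : ℝ) - l0.a k3)))) <;>
    by_cases h1m : (∃ x, 0 ≤ x ∧ x ≤ 1 ∧ (((l0.a m1 - l1.a m1 : ℤ)):ℝ) + (-(σ1:ℝ)) * x
        = -(-ε * s1 * (s3 * ((l1.a k3 : ℝ) - l0.a k3)))) <;>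
    by_cases h2p : (∃ x, 0 ≤ x ∧ x ≤ 1 ∧ (((l0.a m0 - l1.a m0 : ℤ)):ℝ) + (σ0:ℝ) * x
        = -(ε * s2 * (s3 * ((l1.a k3 : ℝ) - l0.a k3)))) <;>
    by_cases h2m : (∃ x, 0 ≤ x ∧ x ≤ 1 ∧ (((l0.a m0 - l1.a m0 : ℤ)):ℝ) + (σ0:ℝ) * x
        = -(-ε * s2 * (s3 * ((l1.a k3 : ℝ) - l0.a k3)))) <;>
    first
      | exact absurd (And.intro h1p h1m) hexcl1
      | exact absurd (And.intro h2p h2m) hexcl2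
      | (simp only [hiff1, hiff2, h1p, h1m, h2p, h2m, or_true, true_or, or_self, or_false,
          false_or, and_true, true_and, and_false, false_and, and_self, ite_true, ite_false,
          eq_self_iff_true]; norm_num)
  · exact absurd (hm1.trans hm0.symm) hm10
end
end

section
/- Let ℓ0 and ℓ1 be two segments of a region and u ∈ R^3 with ‖u‖ < 1. Then there exist s0,s1 ∈ [0,1] with ℓ0(s0) − ℓ1(s1) = u if and only if there exist (i,j) ∈ {0,1}^2 and a0,a1 ∈ (−1,1) such that ℓ0(i) = ℓ1(j), u = a0·v(ℓ0) + a1·v(ℓ1), (−1)^i a0 ≥ 0 and (−1)^j a1 ≤ 0. -/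
open scoped BigOperators
noncomputable section

private lemma seg_dir (s : Seg) : ∃ k : Fin 3,
    (s.b k - s.a k = 1 ∨ s.b k - s.a k = -1) ∧ ∀ j, j ≠ k → s.b j = s.a j := by
  have h := s.adj
  rw [Fin.sum_univ_three] at h
  simp only [Int.abs_eq_natAbs] at h
  by_cases h0 : (s.a 0 - s.b 0).natAbs = 1
  · have c1 : s.b 1 = s.a 1 := by omega
    have c2 : s.b 2 = s.a 2 := by omega
    refine ⟨0, by omega, fun j hj => ?_⟩
    fin_cases j
    · exact absurd rfl hj
    · exact c1
    · exact c2
  · by_cases h1 : (s.a 1 - s.b 1).natAbs = 1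
    · have c1 : s.b 0 = s.a 0 := by omega
      have c2 : s.b 2 = s.a 2 := by omega
      refine ⟨1, by omega, fun j hj => ?_⟩
      fin_cases j
      · exact c1
      · exact absurd rfl hj
      · exact c2
    · have c1 : s.b 0 = s.a 0 := by omega
      have c2 : s.b 1 = s.a 1 := by omega
      refine ⟨2, by omega, fun j hj => ?_⟩
      fin_cases j
      · exact c1
      · exact c2
      · exact absurd rfl hj

private lemma pt_eq_of (l0 l1 : Seg) (k0 k1 : Fin 3) (i j : ℕ)
    (hz0 : ∀ c, c ≠ k0 → l0.b c = l0.a c) (hz1 : ∀ c, c ≠ k1 → l1.b c = l1.a c)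
    (hzz : ∀ c, c ≠ k0 → c ≠ k1 → l0.a c = l1.a c)
    (h0 : l0.a k0 + i * (l0.b k0 - l0.a k0) = l1.a k0 + j * (l1.b k0 - l1.a k0))
    (h1 : l0.a k1 + i * (l0.b k1 - l0.a k1) = l1.a k1 + j * (l1.b k1 - l1.a k1)) :
    l0.pt i = l1.pt j := by
  funext c
  simp only [Seg.pt, cubeCenter]
  by_cases hc1 : c = k1
  · subst hc1
    have hr : ((l0.a c + i * (l0.b c - l0.a c) : ℤ) : ℝ)
        = ((l1.a c + j * (l1.b c - l1.a c) : ℤ) : ℝ) := by exact_mod_cast h1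
    push_cast at hr
    linarith
  by_cases hc0 : c = k0
  · subst hc0
    have hr : ((l0.a c + i * (l0.b c - l0.a c) : ℤ) : ℝ)
        = ((l1.a c + j * (l1.b c - l1.a c) : ℤ) : ℝ) := by exact_mod_cast h0
    push_cast at hr
    linarith
  · rw [hz0 c hc0, hz1 c hc1, hzz c hc0 hc1]; ring

private lemma u_eq_of (l0 l1 : Seg) (u : R3) (k0 k1 : Fin 3) (a0 a1 : ℝ)
    (hzz : ∀ c, c ≠ k0 → c ≠ k1 → u c = 0)
    (hz0 : ∀ c, c ≠ k0 → l0.b c = l0.a c) (hz1 : ∀ c, c ≠ k1 → l1.b c = l1.a c)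
    (h0 : u k0 = a0 * ((l0.b k0 : ℝ) - l0.a k0) + a1 * ((l1.b k0 : ℝ) - l1.a k0))
    (h1 : u k1 = a0 * ((l0.b k1 : ℝ) - l0.a k1) + a1 * ((l1.b k1 : ℝ) - l1.a k1)) :
    u = a0 • l0.vec + a1 • l1.vec := by
  funext c
  simp only [Pi.add_apply, Pi.smul_apply, Seg.vec, smul_eq_mul]
  by_cases hc1 : c = k1
  · subst hc1; exact h1
  by_cases hc0 : c = k0
  · subst hc0; exact h0
  · rw [hz0 c hc0, hz1 c hc1, hzz c hc0 hc1]; ring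

private lemma heq_of (l0 l1 : Seg) (u : R3) (i j : ℕ) (a0 a1 : ℝ)
    (hpt : l0.pt i = l1.pt j) (huv : u = a0 • l0.vec + a1 • l1.vec) :
    l0.pt (i + a0) - l1.pt (j - a1) = u := by
  funext c
  have h1 := congrFun hpt c
  have h2 := congrFun huv c
  simp only [Seg.pt, cubeCenter, Pi.sub_apply, Pi.add_apply, Pi.smul_apply, Seg.vec,
    smul_eq_mul] at h1 h2 ⊢
  linear_combination h1 - h2
theorem statement8 (R : Finset (Fin 3 → ℤ)) (l0 l1 : Seg)
    (h0 : l0.inRegion R) (h1 : l1.inRegion R) (u : R3) (hu : Real.sqrt (dot u u) < 1) :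
    (∃ s0 ∈ Set.Icc (0:ℝ) 1, ∃ s1 ∈ Set.Icc (0:ℝ) 1, l0.pt s0 - l1.pt s1 = u) ↔
    (∃ i j : ℕ, i ≤ 1 ∧ j ≤ 1 ∧ ∃ a0 a1 : ℝ,
      a0 ∈ Set.Ioo (-1:ℝ) 1 ∧ a1 ∈ Set.Ioo (-1:ℝ) 1 ∧
      l0.pt i = l1.pt j ∧ u = a0 • l0.vec + a1 • l1.vec ∧
      0 ≤ (-1:ℝ)^i * a0 ∧ (-1:ℝ)^j * a1 ≤ 0) := by
  classical
  have hdnn : 0 ≤ dot u u := Finset.sum_nonneg fun i _ => mul_self_nonneg _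
  have hdd : dot u u < 1 := by
    nlinarith [Real.sq_sqrt hdnn, Real.sqrt_nonneg (dot u u)]
  have hub : ∀ c, -1 < u c ∧ u c < 1 := by
    intro c
    have hle : u c * u c ≤ dot u u :=
      Finset.single_le_sum (f := fun i => u i * u i) (fun i _ => mul_self_nonneg _)
        (Finset.mem_univ c)
    constructor <;> nlinarith
  obtain ⟨k0, he0, hz0⟩ := seg_dir l0
  obtain ⟨k1, he1, hz1⟩ := seg_dir l1
  constructor
  · rintro ⟨s0, ⟨hs00, hs01⟩, s1, ⟨hs10, hs11⟩, heq⟩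
    have hco : ∀ c, ((l0.a c : ℝ) - l1.a c) + s0 * ((l0.b c : ℝ) - l0.a c)
        - s1 * ((l1.b c : ℝ) - l1.a c) = u c := by
      intro c
      have h := congrFun heq c
      simp only [Pi.sub_apply, Seg.pt, cubeCenter] at h
      linarith
    have hzz : ∀ c, c ≠ k0 → c ≠ k1 → l0.a c = l1.a c ∧ u c = 0 := by
      intro c hc0 hc1
      have h := hco c
      rw [hz0 c hc0, hz1 c hc1] at h
      have h2 : ((l0.a c - l1.a c : ℤ) : ℝ) = u c := by push_cast; linarith
      have hb := hub c
      have h6 : (-1 : ℤ) < l0.a c - l1.a c := by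
        have h4 : ((-1 : ℤ) : ℝ) < ((l0.a c - l1.a c : ℤ) : ℝ) := by
          rw [h2]; push_cast; exact hb.1
        exact_mod_cast h4
      have h7 : (l0.a c - l1.a c : ℤ) < 1 := by
        have h5 : ((l0.a c - l1.a c : ℤ) : ℝ) < ((1 : ℤ) : ℝ) := by
          rw [h2]; push_cast; exact hb.2
        exact_mod_cast h5
      have h3 : l0.a c - l1.a c = 0 := by omega
      refine ⟨by omega, ?_⟩
      rw [← h2, h3]; norm_num
    have hzzu : ∀ c, c ≠ k0 → c ≠ k1 → u c = 0 := fun c a b => (hzz c a b).2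
    have hzza : ∀ c, c ≠ k0 → c ≠ k1 → l0.a c = l1.a c := fun c a b => (hzz c a b).1
    by_cases hkk : k0 = k1
    · subst hkk
      have hk := hco k0
      have hb := hub k0
      rcases he0 with he0 | he0 <;> rcases he1 with he1 | he1
      · have hE0 : (l0.b k0 : ℝ) - l0.a k0 = 1 := by exact_mod_cast he0
        have hE1 : (l1.b k0 : ℝ) - l1.a k0 = 1 := by exact_mod_cast he1
        rw [hE0, hE1] at hk
        have key : ((l0.a k0 - l1.a k0 : ℤ) : ℝ) + s0 - s1 = u k0 := by push_cast; linarith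
        have hm : l0.a k0 - l1.a k0 = -1 ∨ l0.a k0 - l1.a k0 = 0 ∨ l0.a k0 - l1.a k0 = 1 := by
          have hl : ((-2:ℤ) : ℝ) < ((l0.a k0 - l1.a k0 : ℤ) : ℝ) := by push_cast; linarith
          have hr : ((l0.a k0 - l1.a k0 : ℤ) : ℝ) < ((2:ℤ) : ℝ) := by push_cast; linarith
          have hl' := Int.cast_lt.mp hl
          have hr' := Int.cast_lt.mp hr
          omega
        rcases hm with hm | hm | hm <;> rw [hm] at key <;> norm_num at key
        · refine ⟨1, 0, by norm_num, by norm_num, (0:ℝ), (u k0), Set.mem_Ioo.mpr ⟨by norm_num, by norm_num⟩, Set.mem_Ioo.mpr ⟨hb.1, hb.2⟩,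
            pt_eq_of l0 l1 k0 k0 1 0 hz0 hz1 hzza ?_ ?_,
            u_eq_of l0 l1 u k0 k0 (0:ℝ) (u k0) hzzu hz0 hz1 ?_ ?_, ?_, ?_⟩
          · push_cast; omega
          · push_cast; omega
          · rw [hE0, hE1]; ring
          · rw [hE0, hE1]; ring
          · norm_num
          · norm_num; linarith
        · refine ⟨0, 0, by norm_num, by norm_num, (max (u k0) 0), (min (u k0) 0), Set.mem_Ioo.mpr ⟨by have := le_max_right (u k0) 0; linarith, max_lt hb.2 (by norm_num)⟩, Set.mem_Ioo.mpr ⟨lt_min hb.1 (by norm_num), by have := min_le_right (u k0) 0; linarith⟩,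
            pt_eq_of l0 l1 k0 k0 0 0 hz0 hz1 hzza ?_ ?_,
            u_eq_of l0 l1 u k0 k0 (max (u k0) 0) (min (u k0) 0) hzzu hz0 hz1 ?_ ?_, ?_, ?_⟩
          · push_cast; omega
          · push_cast; omega
          · rw [hE0, hE1]; have := max_add_min (u k0) 0; linarith
          · rw [hE0, hE1]; have := max_add_min (u k0) 0; linarith
          · norm_num
          · norm_num [min_le_right]
        · refine ⟨0, 1, by norm_num, by norm_num, (0:ℝ), (u k0), Set.mem_Ioo.mpr ⟨by norm_num, by norm_num⟩, Set.mem_Ioo.mpr ⟨hb.1, hb.2⟩,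
            pt_eq_of l0 l1 k0 k0 0 1 hz0 hz1 hzza ?_ ?_,
            u_eq_of l0 l1 u k0 k0 (0:ℝ) (u k0) hzzu hz0 hz1 ?_ ?_, ?_, ?_⟩
          · push_cast; omega
          · push_cast; omega
          · rw [hE0, hE1]; ring
          · rw [hE0, hE1]; ring
          · norm_num
          · norm_num; linarith
      · have hE0 : (l0.b k0 : ℝ) - l0.a k0 = 1 := by exact_mod_cast he0
        have hE1 : (l1.b k0 : ℝ) - l1.a k0 = -1 := by exact_mod_cast he1
        rw [hE0, hE1] at hk
        have key : ((l0.a k0 - l1.a k0 : ℤ) : ℝ) + s0 + s1 = u k0 := by push_cast; linarith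
        have hm : l0.a k0 - l1.a k0 = -2 ∨ l0.a k0 - l1.a k0 = -1 ∨ l0.a k0 - l1.a k0 = 0 := by
          have hl : ((-3:ℤ) : ℝ) < ((l0.a k0 - l1.a k0 : ℤ) : ℝ) := by push_cast; linarith
          have hr : ((l0.a k0 - l1.a k0 : ℤ) : ℝ) < ((1:ℤ) : ℝ) := by push_cast; linarith
          have hl' := Int.cast_lt.mp hl
          have hr' := Int.cast_lt.mp hr
          omega
        rcases hm with hm | hm | hm <;> rw [hm] at key <;> norm_num at key
        · refine ⟨1, 1, by norm_num, by norm_num, (u k0), (0:ℝ), Set.mem_Ioo.mpr ⟨hb.1, hb.2⟩, Set.mem_Ioo.mpr ⟨by norm_num, by norm_num⟩,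
            pt_eq_of l0 l1 k0 k0 1 1 hz0 hz1 hzza ?_ ?_,
            u_eq_of l0 l1 u k0 k0 (u k0) (0:ℝ) hzzu hz0 hz1 ?_ ?_, ?_, ?_⟩
          · push_cast; omega
          · push_cast; omega
          · rw [hE0, hE1]; ring
          · rw [hE0, hE1]; ring
          · norm_num; linarith
          · norm_num
        · by_cases hcs : 0 ≤ u k0
          · refine ⟨0, 1, by norm_num, by norm_num, (u k0), (0:ℝ), Set.mem_Ioo.mpr ⟨hb.1, hb.2⟩, Set.mem_Ioo.mpr ⟨by norm_num, by norm_num⟩,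
              pt_eq_of l0 l1 k0 k0 0 1 hz0 hz1 hzza ?_ ?_,
              u_eq_of l0 l1 u k0 k0 (u k0) (0:ℝ) hzzu hz0 hz1 ?_ ?_, ?_, ?_⟩
            · push_cast; omega
            · push_cast; omega
            · rw [hE0, hE1]; ring
            · rw [hE0, hE1]; ring
            · norm_num; linarith
            · norm_num
          · refine ⟨1, 0, by norm_num, by norm_num, (u k0), (0:ℝ), Set.mem_Ioo.mpr ⟨hb.1, hb.2⟩, Set.mem_Ioo.mpr ⟨by norm_num, by norm_num⟩,
              pt_eq_of l0 l1 k0 k0 1 0 hz0 hz1 hzza ?_ ?_,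
              u_eq_of l0 l1 u k0 k0 (u k0) (0:ℝ) hzzu hz0 hz1 ?_ ?_, ?_, ?_⟩
            · push_cast; omega
            · push_cast; omega
            · rw [hE0, hE1]; ring
            · rw [hE0, hE1]; ring
            · norm_num; linarith
            · norm_num
        · refine ⟨0, 0, by norm_num, by norm_num, (u k0), (0:ℝ), Set.mem_Ioo.mpr ⟨hb.1, hb.2⟩, Set.mem_Ioo.mpr ⟨by norm_num, by norm_num⟩,
            pt_eq_of l0 l1 k0 k0 0 0 hz0 hz1 hzza ?_ ?_,
            u_eq_of l0 l1 u k0 k0 (u k0) (0:ℝ) hzzu hz0 hz1 ?_ ?_, ?_, ?_⟩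
          · push_cast; omega
          · push_cast; omega
          · rw [hE0, hE1]; ring
          · rw [hE0, hE1]; ring
          · norm_num; linarith
          · norm_num
      · have hE0 : (l0.b k0 : ℝ) - l0.a k0 = -1 := by exact_mod_cast he0
        have hE1 : (l1.b k0 : ℝ) - l1.a k0 = 1 := by exact_mod_cast he1
        rw [hE0, hE1] at hk
        have key : ((l0.a k0 - l1.a k0 : ℤ) : ℝ) - s0 - s1 = u k0 := by push_cast; linarith
        have hm : l0.a k0 - l1.a k0 = 0 ∨ l0.a k0 - l1.a k0 = 1 ∨ l0.a k0 - l1.a k0 = 2 := by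
          have hl : ((-1:ℤ) : ℝ) < ((l0.a k0 - l1.a k0 : ℤ) : ℝ) := by push_cast; linarith
          have hr : ((l0.a k0 - l1.a k0 : ℤ) : ℝ) < ((3:ℤ) : ℝ) := by push_cast; linarith
          have hl' := Int.cast_lt.mp hl
          have hr' := Int.cast_lt.mp hr
          omega
        rcases hm with hm | hm | hm <;> rw [hm] at key <;> norm_num at key
        · refine ⟨0, 0, by norm_num, by norm_num, (-u k0), (0:ℝ), Set.mem_Ioo.mpr ⟨by linarith [hb.2], by linarith [hb.1]⟩, Set.mem_Ioo.mpr ⟨by norm_num, by norm_num⟩,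
            pt_eq_of l0 l1 k0 k0 0 0 hz0 hz1 hzza ?_ ?_,
            u_eq_of l0 l1 u k0 k0 (-u k0) (0:ℝ) hzzu hz0 hz1 ?_ ?_, ?_, ?_⟩
          · push_cast; omega
          · push_cast; omega
          · rw [hE0, hE1]; ring
          · rw [hE0, hE1]; ring
          · norm_num; linarith
          · norm_num
        · by_cases hcs : 0 ≤ u k0
          · refine ⟨1, 0, by norm_num, by norm_num, (-u k0), (0:ℝ), Set.mem_Ioo.mpr ⟨by linarith [hb.2], by linarith [hb.1]⟩, Set.mem_Ioo.mpr ⟨by norm_num, by norm_num⟩,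
              pt_eq_of l0 l1 k0 k0 1 0 hz0 hz1 hzza ?_ ?_,
              u_eq_of l0 l1 u k0 k0 (-u k0) (0:ℝ) hzzu hz0 hz1 ?_ ?_, ?_, ?_⟩
            · push_cast; omega
            · push_cast; omega
            · rw [hE0, hE1]; ring
            · rw [hE0, hE1]; ring
            · norm_num; linarith
            · norm_num
          · refine ⟨0, 1, by norm_num, by norm_num, (-u k0), (0:ℝ), Set.mem_Ioo.mpr ⟨by linarith [hb.2], by linarith [hb.1]⟩, Set.mem_Ioo.mpr ⟨by norm_num, by norm_num⟩,
              pt_eq_of l0 l1 k0 k0 0 1 hz0 hz1 hzza ?_ ?_,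
              u_eq_of l0 l1 u k0 k0 (-u k0) (0:ℝ) hzzu hz0 hz1 ?_ ?_, ?_, ?_⟩
            · push_cast; omega
            · push_cast; omega
            · rw [hE0, hE1]; ring
            · rw [hE0, hE1]; ring
            · norm_num; linarith
            · norm_num
        · refine ⟨1, 1, by norm_num, by norm_num, (-u k0), (0:ℝ), Set.mem_Ioo.mpr ⟨by linarith [hb.2], by linarith [hb.1]⟩, Set.mem_Ioo.mpr ⟨by norm_num, by norm_num⟩,
            pt_eq_of l0 l1 k0 k0 1 1 hz0 hz1 hzza ?_ ?_,
            u_eq_of l0 l1 u k0 k0 (-u k0) (0:ℝ) hzzu hz0 hz1 ?_ ?_, ?_, ?_⟩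
          · push_cast; omega
          · push_cast; omega
          · rw [hE0, hE1]; ring
          · rw [hE0, hE1]; ring
          · norm_num; linarith
          · norm_num
      · have hE0 : (l0.b k0 : ℝ) - l0.a k0 = -1 := by exact_mod_cast he0
        have hE1 : (l1.b k0 : ℝ) - l1.a k0 = -1 := by exact_mod_cast he1
        rw [hE0, hE1] at hk
        have key : ((l0.a k0 - l1.a k0 : ℤ) : ℝ) - s0 + s1 = u k0 := by push_cast; linarith
        have hm : l0.a k0 - l1.a k0 = -1 ∨ l0.a k0 - l1.a k0 = 0 ∨ l0.a k0 - l1.a k0 = 1 := by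
          have hl : ((-2:ℤ) : ℝ) < ((l0.a k0 - l1.a k0 : ℤ) : ℝ) := by push_cast; linarith
          have hr : ((l0.a k0 - l1.a k0 : ℤ) : ℝ) < ((2:ℤ) : ℝ) := by push_cast; linarith
          have hl' := Int.cast_lt.mp hl
          have hr' := Int.cast_lt.mp hr
          omega
        rcases hm with hm | hm | hm <;> rw [hm] at key <;> norm_num at key
        · refine ⟨0, 1, by norm_num, by norm_num, (-u k0), (0:ℝ), Set.mem_Ioo.mpr ⟨by linarith [hb.2], by linarith [hb.1]⟩, Set.mem_Ioo.mpr ⟨by norm_num, by norm_num⟩,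
            pt_eq_of l0 l1 k0 k0 0 1 hz0 hz1 hzza ?_ ?_,
            u_eq_of l0 l1 u k0 k0 (-u k0) (0:ℝ) hzzu hz0 hz1 ?_ ?_, ?_, ?_⟩
          · push_cast; omega
          · push_cast; omega
          · rw [hE0, hE1]; ring
          · rw [hE0, hE1]; ring
          · norm_num; linarith
          · norm_num
        · refine ⟨0, 0, by norm_num, by norm_num, (max (-u k0) 0), (min (-u k0) 0), Set.mem_Ioo.mpr ⟨by have := le_max_right (-u k0) 0; linarith, max_lt (by linarith [hb.1]) (by norm_num)⟩, Set.mem_Ioo.mpr ⟨lt_min (by linarith [hb.2]) (by norm_num), by have := min_le_right (-u k0) 0; linarith⟩,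
            pt_eq_of l0 l1 k0 k0 0 0 hz0 hz1 hzza ?_ ?_,
            u_eq_of l0 l1 u k0 k0 (max (-u k0) 0) (min (-u k0) 0) hzzu hz0 hz1 ?_ ?_, ?_, ?_⟩
          · push_cast; omega
          · push_cast; omega
          · rw [hE0, hE1]; have := max_add_min (-u k0) 0; linarith
          · rw [hE0, hE1]; have := max_add_min (-u k0) 0; linarith
          · norm_num
          · norm_num [min_le_right]
        · refine ⟨1, 0, by norm_num, by norm_num, (-u k0), (0:ℝ), Set.mem_Ioo.mpr ⟨by linarith [hb.2], by linarith [hb.1]⟩, Set.mem_Ioo.mpr ⟨by norm_num, by norm_num⟩,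
            pt_eq_of l0 l1 k0 k0 1 0 hz0 hz1 hzza ?_ ?_,
            u_eq_of l0 l1 u k0 k0 (-u k0) (0:ℝ) hzzu hz0 hz1 ?_ ?_, ?_, ?_⟩
          · push_cast; omega
          · push_cast; omega
          · rw [hE0, hE1]; ring
          · rw [hE0, hE1]; ring
          · norm_num; linarith
          · norm_num
    · have hk0 := hco k0
      have hk1 := hco k1
      have hkk' : k1 ≠ k0 := Ne.symm hkk
      rw [hz1 k0 hkk] at hk0
      rw [hz0 k1 hkk'] at hk1
      have hb0 := hub k0
      have hb1 := hub k1
      rcases he0 with he0 | he0 <;> rcases he1 with he1 | he1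
      · have hE0 : (l0.b k0 : ℝ) - l0.a k0 = 1 := by exact_mod_cast he0
        have hE1 : (l1.b k1 : ℝ) - l1.a k1 = 1 := by exact_mod_cast he1
        rw [hE0] at hk0
        rw [hE1] at hk1
        have key0 : ((l0.a k0 - l1.a k0 : ℤ) : ℝ) + s0 = u k0 := by push_cast; linarith
        have key1 : ((l0.a k1 - l1.a k1 : ℤ) : ℝ) - s1 = u k1 := by push_cast; linarith
        have hm0 : l0.a k0 - l1.a k0 = 0 ∨ l0.a k0 - l1.a k0 = -1 := by
          have hl : ((-2:ℤ) : ℝ) < ((l0.a k0 - l1.a k0 : ℤ) : ℝ) := by push_cast; linarith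
          have hr : ((l0.a k0 - l1.a k0 : ℤ) : ℝ) < ((1:ℤ) : ℝ) := by push_cast; linarith
          have hl' := Int.cast_lt.mp hl
          have hr' := Int.cast_lt.mp hr
          omega
        have hm1 : l0.a k1 - l1.a k1 = 0 ∨ l0.a k1 - l1.a k1 = 1 := by
          have hl : ((-1:ℤ) : ℝ) < ((l0.a k1 - l1.a k1 : ℤ) : ℝ) := by push_cast; linarith
          have hr : ((l0.a k1 - l1.a k1 : ℤ) : ℝ) < ((2:ℤ) : ℝ) := by push_cast; linarith
          have hl' := Int.cast_lt.mp hl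
          have hr' := Int.cast_lt.mp hr
          omega
        rcases hm0 with hm0 | hm0 <;> rcases hm1 with hm1 | hm1
        · rw [hm0] at key0; rw [hm1] at key1
          norm_num at key0 key1
          refine ⟨0, 0, by norm_num, by norm_num, (u k0), (u k1), Set.mem_Ioo.mpr ⟨hb0.1, hb0.2⟩, Set.mem_Ioo.mpr ⟨hb1.1, hb1.2⟩,
            pt_eq_of l0 l1 k0 k1 0 0 hz0 hz1 hzza ?_ ?_,
            u_eq_of l0 l1 u k0 k1 (u k0) (u k1) hzzu hz0 hz1 ?_ ?_, ?_, ?_⟩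
          · have hx := hz1 k0 hkk; push_cast; omega
          · have hx := hz0 k1 hkk'; push_cast; omega
          · rw [hz1 k0 hkk, hE0]; ring
          · rw [hz0 k1 hkk', hE1]; ring
          · norm_num; linarith
          · norm_num; linarith
        · rw [hm0] at key0; rw [hm1] at key1
          norm_num at key0 key1
          refine ⟨0, 1, by norm_num, by norm_num, (u k0), (u k1), Set.mem_Ioo.mpr ⟨hb0.1, hb0.2⟩, Set.mem_Ioo.mpr ⟨hb1.1, hb1.2⟩,
            pt_eq_of l0 l1 k0 k1 0 1 hz0 hz1 hzza ?_ ?_,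
            u_eq_of l0 l1 u k0 k1 (u k0) (u k1) hzzu hz0 hz1 ?_ ?_, ?_, ?_⟩
          · have hx := hz1 k0 hkk; push_cast; omega
          · have hx := hz0 k1 hkk'; push_cast; omega
          · rw [hz1 k0 hkk, hE0]; ring
          · rw [hz0 k1 hkk', hE1]; ring
          · norm_num; linarith
          · norm_num; linarith
        · rw [hm0] at key0; rw [hm1] at key1
          norm_num at key0 key1
          refine ⟨1, 0, by norm_num, by norm_num, (u k0), (u k1), Set.mem_Ioo.mpr ⟨hb0.1, hb0.2⟩, Set.mem_Ioo.mpr ⟨hb1.1, hb1.2⟩,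
            pt_eq_of l0 l1 k0 k1 1 0 hz0 hz1 hzza ?_ ?_,
            u_eq_of l0 l1 u k0 k1 (u k0) (u k1) hzzu hz0 hz1 ?_ ?_, ?_, ?_⟩
          · have hx := hz1 k0 hkk; push_cast; omega
          · have hx := hz0 k1 hkk'; push_cast; omega
          · rw [hz1 k0 hkk, hE0]; ring
          · rw [hz0 k1 hkk', hE1]; ring
          · norm_num; linarith
          · norm_num; linarith
        · rw [hm0] at key0; rw [hm1] at key1
          norm_num at key0 key1
          refine ⟨1, 1, by norm_num, by norm_num, (u k0), (u k1), Set.mem_Ioo.mpr ⟨hb0.1, hb0.2⟩, Set.mem_Ioo.mpr ⟨hb1.1, hb1.2⟩,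
            pt_eq_of l0 l1 k0 k1 1 1 hz0 hz1 hzza ?_ ?_,
            u_eq_of l0 l1 u k0 k1 (u k0) (u k1) hzzu hz0 hz1 ?_ ?_, ?_, ?_⟩
          · have hx := hz1 k0 hkk; push_cast; omega
          · have hx := hz0 k1 hkk'; push_cast; omega
          · rw [hz1 k0 hkk, hE0]; ring
          · rw [hz0 k1 hkk', hE1]; ring
          · norm_num; linarith
          · norm_num; linarith
      · have hE0 : (l0.b k0 : ℝ) - l0.a k0 = 1 := by exact_mod_cast he0
        have hE1 : (l1.b k1 : ℝ) - l1.a k1 = (-1) := by exact_mod_cast he1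
        rw [hE0] at hk0
        rw [hE1] at hk1
        have key0 : ((l0.a k0 - l1.a k0 : ℤ) : ℝ) + s0 = u k0 := by push_cast; linarith
        have key1 : ((l0.a k1 - l1.a k1 : ℤ) : ℝ) + s1 = u k1 := by push_cast; linarith
        have hm0 : l0.a k0 - l1.a k0 = 0 ∨ l0.a k0 - l1.a k0 = -1 := by
          have hl : ((-2:ℤ) : ℝ) < ((l0.a k0 - l1.a k0 : ℤ) : ℝ) := by push_cast; linarith
          have hr : ((l0.a k0 - l1.a k0 : ℤ) : ℝ) < ((1:ℤ) : ℝ) := by push_cast; linarith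
          have hl' := Int.cast_lt.mp hl
          have hr' := Int.cast_lt.mp hr
          omega
        have hm1 : l0.a k1 - l1.a k1 = 0 ∨ l0.a k1 - l1.a k1 = -1 := by
          have hl : ((-2:ℤ) : ℝ) < ((l0.a k1 - l1.a k1 : ℤ) : ℝ) := by push_cast; linarith
          have hr : ((l0.a k1 - l1.a k1 : ℤ) : ℝ) < ((1:ℤ) : ℝ) := by push_cast; linarith
          have hl' := Int.cast_lt.mp hl
          have hr' := Int.cast_lt.mp hr
          omega
        rcases hm0 with hm0 | hm0 <;> rcases hm1 with hm1 | hm1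
        · rw [hm0] at key0; rw [hm1] at key1
          norm_num at key0 key1
          refine ⟨0, 0, by norm_num, by norm_num, (u k0), (-u k1), Set.mem_Ioo.mpr ⟨hb0.1, hb0.2⟩, Set.mem_Ioo.mpr ⟨by linarith [hb1.2], by linarith [hb1.1]⟩,
            pt_eq_of l0 l1 k0 k1 0 0 hz0 hz1 hzza ?_ ?_,
            u_eq_of l0 l1 u k0 k1 (u k0) (-u k1) hzzu hz0 hz1 ?_ ?_, ?_, ?_⟩
          · have hx := hz1 k0 hkk; push_cast; omega
          · have hx := hz0 k1 hkk'; push_cast; omega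
          · rw [hz1 k0 hkk, hE0]; ring
          · rw [hz0 k1 hkk', hE1]; ring
          · norm_num; linarith
          · norm_num; linarith
        · rw [hm0] at key0; rw [hm1] at key1
          norm_num at key0 key1
          refine ⟨0, 1, by norm_num, by norm_num, (u k0), (-u k1), Set.mem_Ioo.mpr ⟨hb0.1, hb0.2⟩, Set.mem_Ioo.mpr ⟨by linarith [hb1.2], by linarith [hb1.1]⟩,
            pt_eq_of l0 l1 k0 k1 0 1 hz0 hz1 hzza ?_ ?_,
            u_eq_of l0 l1 u k0 k1 (u k0) (-u k1) hzzu hz0 hz1 ?_ ?_, ?_, ?_⟩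
          · have hx := hz1 k0 hkk; push_cast; omega
          · have hx := hz0 k1 hkk'; push_cast; omega
          · rw [hz1 k0 hkk, hE0]; ring
          · rw [hz0 k1 hkk', hE1]; ring
          · norm_num; linarith
          · norm_num; linarith
        · rw [hm0] at key0; rw [hm1] at key1
          norm_num at key0 key1
          refine ⟨1, 0, by norm_num, by norm_num, (u k0), (-u k1), Set.mem_Ioo.mpr ⟨hb0.1, hb0.2⟩, Set.mem_Ioo.mpr ⟨by linarith [hb1.2], by linarith [hb1.1]⟩,
            pt_eq_of l0 l1 k0 k1 1 0 hz0 hz1 hzza ?_ ?_,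
            u_eq_of l0 l1 u k0 k1 (u k0) (-u k1) hzzu hz0 hz1 ?_ ?_, ?_, ?_⟩
          · have hx := hz1 k0 hkk; push_cast; omega
          · have hx := hz0 k1 hkk'; push_cast; omega
          · rw [hz1 k0 hkk, hE0]; ring
          · rw [hz0 k1 hkk', hE1]; ring
          · norm_num; linarith
          · norm_num; linarith
        · rw [hm0] at key0; rw [hm1] at key1
          norm_num at key0 key1
          refine ⟨1, 1, by norm_num, by norm_num, (u k0), (-u k1), Set.mem_Ioo.mpr ⟨hb0.1, hb0.2⟩, Set.mem_Ioo.mpr ⟨by linarith [hb1.2], by linarith [hb1.1]⟩,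
            pt_eq_of l0 l1 k0 k1 1 1 hz0 hz1 hzza ?_ ?_,
            u_eq_of l0 l1 u k0 k1 (u k0) (-u k1) hzzu hz0 hz1 ?_ ?_, ?_, ?_⟩
          · have hx := hz1 k0 hkk; push_cast; omega
          · have hx := hz0 k1 hkk'; push_cast; omega
          · rw [hz1 k0 hkk, hE0]; ring
          · rw [hz0 k1 hkk', hE1]; ring
          · norm_num; linarith
          · norm_num; linarith
      · have hE0 : (l0.b k0 : ℝ) - l0.a k0 = (-1) := by exact_mod_cast he0
        have hE1 : (l1.b k1 : ℝ) - l1.a k1 = 1 := by exact_mod_cast he1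
        rw [hE0] at hk0
        rw [hE1] at hk1
        have key0 : ((l0.a k0 - l1.a k0 : ℤ) : ℝ) - s0 = u k0 := by push_cast; linarith
        have key1 : ((l0.a k1 - l1.a k1 : ℤ) : ℝ) - s1 = u k1 := by push_cast; linarith
        have hm0 : l0.a k0 - l1.a k0 = 0 ∨ l0.a k0 - l1.a k0 = 1 := by
          have hl : ((-1:ℤ) : ℝ) < ((l0.a k0 - l1.a k0 : ℤ) : ℝ) := by push_cast; linarith
          have hr : ((l0.a k0 - l1.a k0 : ℤ) : ℝ) < ((2:ℤ) : ℝ) := by push_cast; linarith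
          have hl' := Int.cast_lt.mp hl
          have hr' := Int.cast_lt.mp hr
          omega
        have hm1 : l0.a k1 - l1.a k1 = 0 ∨ l0.a k1 - l1.a k1 = 1 := by
          have hl : ((-1:ℤ) : ℝ) < ((l0.a k1 - l1.a k1 : ℤ) : ℝ) := by push_cast; linarith
          have hr : ((l0.a k1 - l1.a k1 : ℤ) : ℝ) < ((2:ℤ) : ℝ) := by push_cast; linarith
          have hl' := Int.cast_lt.mp hl
          have hr' := Int.cast_lt.mp hr
          omega
        rcases hm0 with hm0 | hm0 <;> rcases hm1 with hm1 | hm1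
        · rw [hm0] at key0; rw [hm1] at key1
          norm_num at key0 key1
          refine ⟨0, 0, by norm_num, by norm_num, (-u k0), (u k1), Set.mem_Ioo.mpr ⟨by linarith [hb0.2], by linarith [hb0.1]⟩, Set.mem_Ioo.mpr ⟨hb1.1, hb1.2⟩,
            pt_eq_of l0 l1 k0 k1 0 0 hz0 hz1 hzza ?_ ?_,
            u_eq_of l0 l1 u k0 k1 (-u k0) (u k1) hzzu hz0 hz1 ?_ ?_, ?_, ?_⟩
          · have hx := hz1 k0 hkk; push_cast; omega
          · have hx := hz0 k1 hkk'; push_cast; omega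
          · rw [hz1 k0 hkk, hE0]; ring
          · rw [hz0 k1 hkk', hE1]; ring
          · norm_num; linarith
          · norm_num; linarith
        · rw [hm0] at key0; rw [hm1] at key1
          norm_num at key0 key1
          refine ⟨0, 1, by norm_num, by norm_num, (-u k0), (u k1), Set.mem_Ioo.mpr ⟨by linarith [hb0.2], by linarith [hb0.1]⟩, Set.mem_Ioo.mpr ⟨hb1.1, hb1.2⟩,
            pt_eq_of l0 l1 k0 k1 0 1 hz0 hz1 hzza ?_ ?_,
            u_eq_of l0 l1 u k0 k1 (-u k0) (u k1) hzzu hz0 hz1 ?_ ?_, ?_, ?_⟩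
          · have hx := hz1 k0 hkk; push_cast; omega
          · have hx := hz0 k1 hkk'; push_cast; omega
          · rw [hz1 k0 hkk, hE0]; ring
          · rw [hz0 k1 hkk', hE1]; ring
          · norm_num; linarith
          · norm_num; linarith
        · rw [hm0] at key0; rw [hm1] at key1
          norm_num at key0 key1
          refine ⟨1, 0, by norm_num, by norm_num, (-u k0), (u k1), Set.mem_Ioo.mpr ⟨by linarith [hb0.2], by linarith [hb0.1]⟩, Set.mem_Ioo.mpr ⟨hb1.1, hb1.2⟩,
            pt_eq_of l0 l1 k0 k1 1 0 hz0 hz1 hzza ?_ ?_,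
            u_eq_of l0 l1 u k0 k1 (-u k0) (u k1) hzzu hz0 hz1 ?_ ?_, ?_, ?_⟩
          · have hx := hz1 k0 hkk; push_cast; omega
          · have hx := hz0 k1 hkk'; push_cast; omega
          · rw [hz1 k0 hkk, hE0]; ring
          · rw [hz0 k1 hkk', hE1]; ring
          · norm_num; linarith
          · norm_num; linarith
        · rw [hm0] at key0; rw [hm1] at key1
          norm_num at key0 key1
          refine ⟨1, 1, by norm_num, by norm_num, (-u k0), (u k1), Set.mem_Ioo.mpr ⟨by linarith [hb0.2], by linarith [hb0.1]⟩, Set.mem_Ioo.mpr ⟨hb1.1, hb1.2⟩,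
            pt_eq_of l0 l1 k0 k1 1 1 hz0 hz1 hzza ?_ ?_,
            u_eq_of l0 l1 u k0 k1 (-u k0) (u k1) hzzu hz0 hz1 ?_ ?_, ?_, ?_⟩
          · have hx := hz1 k0 hkk; push_cast; omega
          · have hx := hz0 k1 hkk'; push_cast; omega
          · rw [hz1 k0 hkk, hE0]; ring
          · rw [hz0 k1 hkk', hE1]; ring
          · norm_num; linarith
          · norm_num; linarith
      · have hE0 : (l0.b k0 : ℝ) - l0.a k0 = (-1) := by exact_mod_cast he0
        have hE1 : (l1.b k1 : ℝ) - l1.a k1 = (-1) := by exact_mod_cast he1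
        rw [hE0] at hk0
        rw [hE1] at hk1
        have key0 : ((l0.a k0 - l1.a k0 : ℤ) : ℝ) - s0 = u k0 := by push_cast; linarith
        have key1 : ((l0.a k1 - l1.a k1 : ℤ) : ℝ) + s1 = u k1 := by push_cast; linarith
        have hm0 : l0.a k0 - l1.a k0 = 0 ∨ l0.a k0 - l1.a k0 = 1 := by
          have hl : ((-1:ℤ) : ℝ) < ((l0.a k0 - l1.a k0 : ℤ) : ℝ) := by push_cast; linarith
          have hr : ((l0.a k0 - l1.a k0 : ℤ) : ℝ) < ((2:ℤ) : ℝ) := by push_cast; linarith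
          have hl' := Int.cast_lt.mp hl
          have hr' := Int.cast_lt.mp hr
          omega
        have hm1 : l0.a k1 - l1.a k1 = 0 ∨ l0.a k1 - l1.a k1 = -1 := by
          have hl : ((-2:ℤ) : ℝ) < ((l0.a k1 - l1.a k1 : ℤ) : ℝ) := by push_cast; linarith
          have hr : ((l0.a k1 - l1.a k1 : ℤ) : ℝ) < ((1:ℤ) : ℝ) := by push_cast; linarith
          have hl' := Int.cast_lt.mp hl
          have hr' := Int.cast_lt.mp hr
          omega
        rcases hm0 with hm0 | hm0 <;> rcases hm1 with hm1 | hm1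
        · rw [hm0] at key0; rw [hm1] at key1
          norm_num at key0 key1
          refine ⟨0, 0, by norm_num, by norm_num, (-u k0), (-u k1), Set.mem_Ioo.mpr ⟨by linarith [hb0.2], by linarith [hb0.1]⟩, Set.mem_Ioo.mpr ⟨by linarith [hb1.2], by linarith [hb1.1]⟩,
            pt_eq_of l0 l1 k0 k1 0 0 hz0 hz1 hzza ?_ ?_,
            u_eq_of l0 l1 u k0 k1 (-u k0) (-u k1) hzzu hz0 hz1 ?_ ?_, ?_, ?_⟩
          · have hx := hz1 k0 hkk; push_cast; omega
          · have hx := hz0 k1 hkk'; push_cast; omega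
          · rw [hz1 k0 hkk, hE0]; ring
          · rw [hz0 k1 hkk', hE1]; ring
          · norm_num; linarith
          · norm_num; linarith
        · rw [hm0] at key0; rw [hm1] at key1
          norm_num at key0 key1
          refine ⟨0, 1, by norm_num, by norm_num, (-u k0), (-u k1), Set.mem_Ioo.mpr ⟨by linarith [hb0.2], by linarith [hb0.1]⟩, Set.mem_Ioo.mpr ⟨by linarith [hb1.2], by linarith [hb1.1]⟩,
            pt_eq_of l0 l1 k0 k1 0 1 hz0 hz1 hzza ?_ ?_,
            u_eq_of l0 l1 u k0 k1 (-u k0) (-u k1) hzzu hz0 hz1 ?_ ?_, ?_, ?_⟩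
          · have hx := hz1 k0 hkk; push_cast; omega
          · have hx := hz0 k1 hkk'; push_cast; omega
          · rw [hz1 k0 hkk, hE0]; ring
          · rw [hz0 k1 hkk', hE1]; ring
          · norm_num; linarith
          · norm_num; linarith
        · rw [hm0] at key0; rw [hm1] at key1
          norm_num at key0 key1
          refine ⟨1, 0, by norm_num, by norm_num, (-u k0), (-u k1), Set.mem_Ioo.mpr ⟨by linarith [hb0.2], by linarith [hb0.1]⟩, Set.mem_Ioo.mpr ⟨by linarith [hb1.2], by linarith [hb1.1]⟩,
            pt_eq_of l0 l1 k0 k1 1 0 hz0 hz1 hzza ?_ ?_,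
            u_eq_of l0 l1 u k0 k1 (-u k0) (-u k1) hzzu hz0 hz1 ?_ ?_, ?_, ?_⟩
          · have hx := hz1 k0 hkk; push_cast; omega
          · have hx := hz0 k1 hkk'; push_cast; omega
          · rw [hz1 k0 hkk, hE0]; ring
          · rw [hz0 k1 hkk', hE1]; ring
          · norm_num; linarith
          · norm_num; linarith
        · rw [hm0] at key0; rw [hm1] at key1
          norm_num at key0 key1
          refine ⟨1, 1, by norm_num, by norm_num, (-u k0), (-u k1), Set.mem_Ioo.mpr ⟨by linarith [hb0.2], by linarith [hb0.1]⟩, Set.mem_Ioo.mpr ⟨by linarith [hb1.2], by linarith [hb1.1]⟩,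
            pt_eq_of l0 l1 k0 k1 1 1 hz0 hz1 hzza ?_ ?_,
            u_eq_of l0 l1 u k0 k1 (-u k0) (-u k1) hzzu hz0 hz1 ?_ ?_, ?_, ?_⟩
          · have hx := hz1 k0 hkk; push_cast; omega
          · have hx := hz0 k1 hkk'; push_cast; omega
          · rw [hz1 k0 hkk, hE0]; ring
          · rw [hz0 k1 hkk', hE1]; ring
          · norm_num; linarith
          · norm_num; linarith
  · rintro ⟨i, j, hi, hj, a0, a1, ha0, ha1, hpt, huv, hsg0, hsg1⟩
    obtain ⟨ha0l, ha0r⟩ := Set.mem_Ioo.mp ha0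
    obtain ⟨ha1l, ha1r⟩ := Set.mem_Ioo.mp ha1
    interval_cases i <;> interval_cases j <;> norm_num at hsg0 hsg1 <;>
      [refine ⟨((0:ℕ):ℝ) + a0, Set.mem_Icc.mpr ⟨by push_cast; linarith, by push_cast; linarith⟩,
        ((0:ℕ):ℝ) - a1, Set.mem_Icc.mpr ⟨by push_cast; linarith, by push_cast; linarith⟩,
        heq_of l0 l1 u 0 0 a0 a1 hpt huv⟩;
      refine ⟨((0:ℕ):ℝ) + a0, Set.mem_Icc.mpr ⟨by push_cast; linarith, by push_cast; linarith⟩,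
        ((1:ℕ):ℝ) - a1, Set.mem_Icc.mpr ⟨by push_cast; linarith, by push_cast; linarith⟩,
        heq_of l0 l1 u 0 1 a0 a1 hpt huv⟩;
      refine ⟨((1:ℕ):ℝ) + a0, Set.mem_Icc.mpr ⟨by push_cast; linarith, by push_cast; linarith⟩,
        ((0:ℕ):ℝ) - a1, Set.mem_Icc.mpr ⟨by push_cast; linarith, by push_cast; linarith⟩,
        heq_of l0 l1 u 1 0 a0 a1 hpt huv⟩;
      refine ⟨((1:ℕ):ℝ) + a0, Set.mem_Icc.mpr ⟨by push_cast; linarith, by push_cast; linarith⟩,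
        ((1:ℕ):ℝ) - a1, Set.mem_Icc.mpr ⟨by push_cast; linarith, by push_cast; linarith⟩,
        heq_of l0 l1 u 1 1 a0 a1 hpt huv⟩]
end
end

section
/- A balanced bicolored finite tree (one with equally many black and white vertices) with at least one edge has at least one white leaf and at least one black leaf. -/
open scoped BigOperators
noncomputable section

theorem statement11 {V : Type} [Fintype V] [DecidableEq V]
    (G : SimpleGraph V) [DecidableRel G.Adj] (hT : G.IsTree)
    (c : V → Bool) (hproper : ∀ u v, G.Adj u v → c u ≠ c v)
    (hbal : (Finset.univ.filter (fun v => c v = true)).card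
          = (Finset.univ.filter (fun v => c v = false)).card)
    (hedge : ∃ u v, G.Adj u v) :
    (∃ v, G.degree v ≤ 1 ∧ c v = true) ∧ (∃ v, G.degree v ≤ 1 ∧ c v = false) := by
  classical
  obtain ⟨u0, v0, huv⟩ := hedge
  have hnontriv : 2 ≤ Fintype.card V := Fintype.one_lt_card_iff_nontrivial.2 ⟨⟨u0, v0, G.ne_of_adj huv⟩⟩
  set A : Bool → Finset (V × V) :=
    fun b => Finset.univ.filter (fun p : V × V => G.Adj p.1 p.2 ∧ c p.1 = b) with hA
  have hsum : ∀ b : Bool, (A b).card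
      = ∑ v ∈ Finset.univ.filter (fun v => c v = b), G.degree v := by
    intro b
    rw [hA]
    rw [Finset.card_filter, ← Finset.univ_product_univ, Finset.sum_product, Finset.sum_filter]
    refine Finset.sum_congr rfl fun v _ => ?_
    by_cases hv : c v = b
    · simp only [hv, and_true, if_true]
      rw [SimpleGraph.degree, ← Finset.card_filter]
      congr 1
      ext w
      simp [SimpleGraph.mem_neighborFinset]
    · simp [hv]
  have hswap : (A true).card = (A false).card := by
    apply Finset.card_bij (fun p _ => (p.2, p.1))
    · rintro ⟨x, y⟩ hp
      simp only [hA, Finset.mem_filter, Finset.mem_univ, true_and] at hp ⊢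
      refine ⟨hp.1.symm, ?_⟩
      have := hproper x y hp.1
      rw [hp.2] at this
      simpa using this.symm
    · rintro ⟨x, y⟩ hx ⟨x', y'⟩ hy h
      simp only [Prod.mk.injEq] at h
      simp [h.1, h.2]
    · rintro ⟨x, y⟩ hp
      refine ⟨(y, x), ?_, rfl⟩
      simp only [hA, Finset.mem_filter, Finset.mem_univ, true_and] at hp ⊢
      refine ⟨hp.1.symm, ?_⟩
      have := hproper x y hp.1
      rw [hp.2] at this
      simpa using this.symm
  have htot : (A true).card + (A false).card = 2 * G.edgeFinset.card := by
    rw [hsum, hsum]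
    rw [← SimpleGraph.sum_degrees_eq_twice_card_edges]
    rw [← Finset.sum_filter_add_sum_filter_not Finset.univ (fun v => c v = true)]
    congr 1
    apply Finset.sum_congr _ (fun _ _ => rfl)
    ext v; simp
  have hedgecard : G.edgeFinset.card + 1 = Fintype.card V := hT.card_edgeFinset
  have hsumdeg : ∀ b : Bool, ∑ v ∈ Finset.univ.filter (fun v => c v = b), G.degree v
      = Fintype.card V - 1 := by
    intro b
    have h1 : (A true).card = G.edgeFinset.card := by omega
    have h2 := hsum true
    have h3 := hsum false
    cases b <;> omega
  have hcards : (Finset.univ.filter (fun v => c v = true)).card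
      + (Finset.univ.filter (fun v => c v = false)).card = Fintype.card V := by
    have h := Finset.card_filter_add_card_filter_not (s := (Finset.univ : Finset V))
      (p := fun v => c v = true)
    rw [← Finset.card_univ, ← h]
    congr 2
    apply Finset.filter_congr
    intro v _; simp
  have main : ∀ b : Bool, ∃ v, G.degree v ≤ 1 ∧ c v = b := by
    intro b
    by_contra hno
    push_neg at hno
    have hdeg : ∀ v ∈ Finset.univ.filter (fun v => c v = b), 2 ≤ G.degree v := by
      intro v hv
      simp only [Finset.mem_filter] at hv
      by_contra hlt
      exact absurd hv.2 (hno v (by omega))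
    have hge := Finset.card_nsmul_le_sum _ _ 2 hdeg
    rw [hsumdeg b] at hge
    have hb : (Finset.univ.filter (fun v => c v = b)).card * 2 = Fintype.card V := by
      cases b <;> omega
    simp only [smul_eq_mul] at hge
    omega
  exact ⟨main true, main false⟩
end
end
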